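/- arXiv:math-ph/0406042 — 2 statements merged into one kernel-verified Lean document; each statement's English description precedes it below -/
import Mathlib

section
/- The Jacobi triple product identity holds: \sum_{k \in \mathbb{Z}} (-1)^k q^{k^2/2} x^k = (q;q)_\infty \, (x^{-1} q^{1/2}; q)_\infty \, (x q^{1/2}; q)_\infty, as an identity of formal Laurent series (equivalently, after replacing q^{1/2} by a formal variable). -/
noncomputable section

instance : TopologicalSpace (LaurentPolynomial ℚ) := ⊥

/-- The product (coefficientwise) topology on formal power series. -/
instance powerSeriesTopology {R : Type*} [Semiring R] [TopologicalSpace R] :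
    TopologicalSpace (PowerSeries R) :=
  TopologicalSpace.induced (fun f (n : ℕ) => (PowerSeries.coeff n) f) Pi.topologicalSpace

/-- Formal power series in `t` whose coefficients are Laurent polynomials in `x`:
the natural home of both sides of the Jacobi triple product after `q = t^2`. -/
abbrev RJ : Type := PowerSeries (LaurentPolynomial ℚ)

/-- The monomial `x^n` (`n : ℤ`), viewed as a constant (in `t`) series. -/
def Xm (n : ℤ) : RJ := PowerSeries.C (LaurentPolynomial.T n)

open Filter PowerSeries

instance : DiscreteTopology (LaurentPolynomial ℚ) := ⟨rfl⟩

lemma rj_embedding : Topology.IsEmbedding (fun (f : RJ) (n : ℕ) => (PowerSeries.coeff n) f) :=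
  ⟨⟨rfl⟩, fun f g h => PowerSeries.ext (congrFun h)⟩

instance : T2Space RJ := rj_embedding.t2Space

lemma rj_tendsto_iff {α : Type*} {F : Filter α} {g : α → RJ} {y : RJ} :
    Tendsto g F (nhds y) ↔ ∀ n, ∀ᶠ a in F, (coeff n) (g a) = (coeff n) y := by
  rw [rj_embedding.isInducing.tendsto_nhds_iff, tendsto_pi_nhds]
  refine forall_congr' fun n => ?_
  rw [nhds_discrete, tendsto_pure]; rfl

-- HasSum criterion
lemma rj_hasSum {ι : Type*} {f : ι → RJ} {S : ℕ → Finset ι}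
    (h : ∀ n i, i ∉ S n → (coeff n) (f i) = 0) :
    HasSum f (PowerSeries.mk fun n => ∑ i ∈ S n, (coeff n) (f i)) := by
  rw [HasSum, rj_tendsto_iff]
  intro n
  rw [show (SummationFilter.unconditional ι).filter = atTop from rfl, eventually_atTop]
  refine ⟨S n, fun F hF => ?_⟩
  rw [map_sum, PowerSeries.coeff_mk]
  exact (Finset.sum_subset hF (fun i _ hi => h n i hi)).symm

-- products ≡ 1
lemma prod_sub_one_dvd {ι : Type*} (s : Finset ι) (f : ι → RJ) (d : RJ)
    (h : ∀ i ∈ s, d ∣ (f i - 1)) : d ∣ (∏ i ∈ s, f i) - 1 := by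
  classical
  induction s using Finset.induction with
  | empty => simp
  | insert a s' hx ih =>
    rw [Finset.prod_insert hx]
    have h1 : d ∣ f a - 1 := h a (Finset.mem_insert_self a s')
    have h2 : d ∣ (∏ i ∈ s', f i) - 1 := ih fun i hi => h i (Finset.mem_insert_of_mem hi)
    have : f a * ∏ i ∈ s', f i - 1 = (f a - 1) * ∏ i ∈ s', f i + ((∏ i ∈ s', f i) - 1) := by ring
    rw [this]
    exact dvd_add (h1.mul_right _) h2

lemma prod_partial_dvd {f : ℕ → RJ} (h : ∀ j, (PowerSeries.X : RJ) ^ (j + 1) ∣ (f j - 1))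
    {F : Finset ℕ} {n : ℕ} (hF : Finset.range (n + 1) ⊆ F) :
    (PowerSeries.X : RJ) ^ (n + 1) ∣ (∏ j ∈ F, f j) - ∏ j ∈ Finset.range (n + 1), f j := by
  have : ∏ j ∈ F, f j = (∏ j ∈ Finset.range (n + 1), f j) * ∏ j ∈ F \ Finset.range (n + 1), f j := by
    rw [← Finset.prod_union (Finset.disjoint_sdiff)]
    congr 1
    rw [Finset.union_sdiff_of_subset hF]
  rw [this]
  have h2 : (PowerSeries.X : RJ) ^ (n + 1) ∣ (∏ j ∈ F \ Finset.range (n + 1), f j) - 1 := by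
    refine prod_sub_one_dvd _ _ _ fun i hi => ?_
    have : n + 1 ≤ i + 1 := by
      have := (Finset.mem_sdiff.mp hi).2
      simp only [Finset.mem_range, not_lt] at this
      omega
    exact (pow_dvd_pow _ this).trans (h i)
  calc (PowerSeries.X : RJ) ^ (n+1) ∣ (∏ j ∈ Finset.range (n + 1), f j) * ((∏ j ∈ F \ Finset.range (n + 1), f j) - 1) := h2.mul_left _
  _ = (∏ j ∈ Finset.range (n + 1), f j) * (∏ j ∈ F \ Finset.range (n + 1), f j) - ∏ j ∈ Finset.range (n + 1), f j := by ring

lemma rj_hasProd {f : ℕ → RJ} (h : ∀ j, (PowerSeries.X : RJ) ^ (j + 1) ∣ (f j - 1)) :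
    HasProd f (PowerSeries.mk fun n => (coeff n) (∏ j ∈ Finset.range (n + 1), f j)) := by
  rw [HasProd, rj_tendsto_iff]
  intro n
  rw [show (SummationFilter.unconditional ℕ).filter = atTop from rfl, eventually_atTop]
  refine ⟨Finset.range (n + 1), fun F hF => ?_⟩
  rw [PowerSeries.coeff_mk]
  have := (PowerSeries.X_pow_dvd_iff.mp (prod_partial_dvd h hF)) n (by omega)
  rw [map_sub] at this
  exact sub_eq_zero.mp this

def tp (a : ℤ) : RJ := (PowerSeries.X : RJ) ^ a.toNat
lemma tp_mul {a b : ℤ} (ha : 0 ≤ a) (hb : 0 ≤ b) : tp (a + b) = tp a * tp b := by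
  rw [tp, tp, tp, ← pow_add]; congr 1; omega
/-- ℤ-indexed Gaussian binomial coefficient in `Q = t²`. -/
def G : ℕ → ℤ → RJ
  | 0, k => if k = 0 then 1 else 0
  | n+1, k => G n k + tp (2*(n+1-k)) * G n (k-1)

lemma G_neg {n : ℕ} {k : ℤ} (h : k < 0) : G n k = 0 := by
  induction n generalizing k with
  | zero => simp [G]; omega
  | succ n ih => rw [G, ih h, ih (by omega)]; ring

lemma G_gt {n : ℕ} {k : ℤ} (h : (n : ℤ) < k) : G n k = 0 := by
  induction n generalizing k with
  | zero => simp [G]; omega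
  | succ n ih => rw [G, ih (by omega), ih (by omega)]; ring

lemma G_zero {n : ℕ} : G n 0 = 1 := by
  induction n with
  | zero => simp [G]
  | succ n ih => rw [G, ih, G_neg (by omega)]; ring

lemma G_self {n : ℕ} : G n n = 1 := by
  induction n with
  | zero => simp [G]
  | succ n ih =>
    rw [G, G_gt (by omega)]
    have : (2 * ((n:ℤ) + 1 - (n + 1 : ℕ))) = 0 := by push_cast; ring
    push_cast
    rw [show (2 * ((n:ℤ) + 1 - ((n:ℤ) + 1))) = 0 by ring]
    have : ((n:ℤ) + 1 - 1) = n := by ring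
    rw [this, ih]
    simp [tp]

lemma G_rec1 (n : ℕ) (k : ℤ) : G (n+1) k = G n k + tp (2*(n+1-k)) * G n (k-1) := rfl

lemma G_rec2 (n : ℕ) (k : ℤ) : G (n+1) k = tp (2*k) * G n k + G n (k-1) := by
  induction n generalizing k with
  | zero =>
    rw [G_rec1]
    rcases eq_or_ne k 0 with rfl | h0
    · simp [G, tp]
    rcases eq_or_ne k 1 with rfl | h1
    · simp [G, tp]
    · have : G 0 k = 0 := by simp [G, h0]
      have h2 : G 0 (k-1) = 0 := by simp [G]; omega
      rw [this, h2]; ring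
  | succ n ih =>
    have key : tp (2*((n:ℤ)+2-k)) * tp (2*(k-1)) * G n (k-1)
        = tp (2*k) * tp (2*((n:ℤ)+1-k)) * G n (k-1) := by
      rcases le_or_gt k 0 with hk | hk
      · rw [G_neg (show k - 1 < 0 by omega)]; ring
      rcases le_or_gt k ((n:ℤ)+1) with hk2 | hk2
      · rw [← tp_mul (a := 2*((n:ℤ)+2-k)) (b := 2*(k-1)) (by omega) (by omega),
            ← tp_mul (a := 2*k) (b := 2*((n:ℤ)+1-k)) (by omega) (by omega)]
        rw [show 2*((n:ℤ)+2-k)+2*(k-1) = 2*k + 2*((n:ℤ)+1-k) by ring]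
      · rw [G_gt (show (n:ℤ) < k - 1 by omega)]; ring
    calc G (n+2) k = G (n+1) k + tp (2*((n:ℤ)+2-k)) * G (n+1) (k-1) := by
          rw [G_rec1]; push_cast; ring_nf
      _ = (tp (2*k) * G n k + G n (k-1))
          + tp (2*((n:ℤ)+2-k)) * (tp (2*(k-1)) * G n (k-1) + G n (k-1-1)) := by
          rw [ih k, ih (k-1)]
      _ = tp (2*k) * (G n k + tp (2*((n:ℤ)+1-k)) * G n (k-1))
          + (G n (k-1) + tp (2*((n:ℤ)+2-k)) * G n (k-1-1)) := by
          linear_combination key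
      _ = tp (2*k) * G (n+1) k + G (n+1) (k-1) := by
          rw [G_rec1 n k, G_rec1 n (k-1)]; push_cast; ring_nf

/-- `pk m = ∏_{j=1}^m (1 - t^{2j})`. -/
def pk (m : ℕ) : RJ := ∏ j ∈ Finset.range m, (1 - (PowerSeries.X : RJ) ^ (2 * (j + 1)))

lemma pk_succ (m : ℕ) : pk (m + 1) = pk m * (1 - (PowerSeries.X : RJ) ^ (2 * (m + 1))) :=
  Finset.prod_range_succ _ m

lemma tp_eq (a : ℤ) (b : ℕ) (h : a = b) : tp a = (PowerSeries.X : RJ) ^ b := by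
  simp only [tp]; rw [show a.toNat = b from by omega]

lemma pk_succ' (m : ℕ) : pk (m + 1) = pk m * (1 - tp (2 * ((m:ℤ) + 1))) := by
  rw [pk_succ, tp_eq (2 * ((m:ℤ) + 1)) (2 * (m+1)) (by push_cast; ring)]

lemma pk_zero : pk 0 = 1 := Finset.prod_range_zero _

lemma pk_ne_zero (m : ℕ) : pk m ≠ 0 := by
  intro h
  have : PowerSeries.constantCoeff (pk m) = 1 := by
    rw [pk, map_prod]
    refine Finset.prod_eq_one fun j _ => ?_
    rw [map_sub, map_one, map_pow, PowerSeries.constantCoeff_X]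
    simp
  rw [h, map_zero] at this
  exact zero_ne_one this

lemma pk_toNat (a : ℤ) (h : 0 ≤ a) : pk ((a+1).toNat) = pk a.toNat * (1 - tp (2*(a+1))) := by
  rw [show (a+1).toNat = a.toNat + 1 from by omega, pk_succ',
    show ((a.toNat:ℤ) + 1) = a + 1 from by omega]

/-- factorial formula: `G n j * pk j * pk (n-j) = pk n` for `0 ≤ j ≤ n`. -/
lemma G_fact (n : ℕ) : ∀ j : ℤ, 0 ≤ j → j ≤ n → G n j * pk j.toNat * pk ((n:ℤ) - j).toNat = pk n := by
  induction n with
  | zero =>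
    intro j h1 h2
    have : j = 0 := by omega
    subst this
    norm_num [G_zero, pk_zero]
  | succ n ih =>
    intro j h1 h2
    push_cast at h2 ⊢
    rcases eq_or_lt_of_le h1 with rfl | hj0
    · rw [G_zero]
      norm_num [pk_zero]
    rcases eq_or_lt_of_le h2 with hj | hjn
    · rw [hj, show (n:ℤ) + 1 = ((n+1 : ℕ) : ℤ) from by push_cast; ring, G_self]
      norm_num [pk_zero]
    · -- 0 < j ≤ n
      have hjn' : j ≤ (n:ℤ) := by omega
      have e2 : pk j.toNat = pk (j-1).toNat * (1 - tp (2*j)) := by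
        have := pk_toNat (j-1) (by omega)
        rw [show (j-1+1) = j from by ring] at this
        exact this
      have e1 : pk ((n:ℤ) + 1 - j).toNat = pk ((n:ℤ)-j).toNat * (1 - tp (2*((n:ℤ)+1-j))) := by
        have := pk_toNat ((n:ℤ)-j) (by omega)
        rw [show ((n:ℤ)-j+1) = (n:ℤ)+1-j from by ring] at this
        exact this
      have e3 : G n j * (pk (j-1).toNat * (1 - tp (2*j))) * pk ((n:ℤ)-j).toNat = pk n := by
        rw [← e2]; exact ih j (by omega) (by omega)
      have e4 : G n (j-1) * pk (j-1).toNat * (pk ((n:ℤ)-j).toNat * (1 - tp (2*((n:ℤ)+1-j)))) = pk n := by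
        rw [← e1]
        have := ih (j-1) (by omega) (by omega)
        rw [show ((n:ℤ) - (j-1)) = (n:ℤ)+1-j from by ring] at this
        exact this
      have e6 : tp (2*((n:ℤ)+1-j)) * tp (2*j) = tp (2*((n:ℤ)+1)) := by
        rw [← tp_mul (by omega) (by omega)]
        congr 1; ring
      rw [show ((n:ℕ)+1 : ℕ) = n + 1 from rfl, pk_succ', G_rec1, e1, e2]
      push_cast
      linear_combination (1 - tp (2*((n:ℤ)+1-j))) * e3 + tp (2*((n:ℤ)+1-j)) * (1 - tp (2*j)) * e4 - pk n * e6

lemma G_symm {n : ℕ} {j : ℤ} (h1 : 0 ≤ j) (h2 : j ≤ n) : G n j = G n ((n:ℤ) - j) := by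
  have f1 := G_fact n j h1 h2
  have f2 := G_fact n ((n:ℤ) - j) (by omega) (by omega)
  rw [show (n:ℤ) - ((n:ℤ) - j) = j from by ring] at f2
  have hne : pk j.toNat * pk ((n:ℤ)-j).toNat ≠ 0 := mul_ne_zero (pk_ne_zero _) (pk_ne_zero _)
  have : G n j * (pk j.toNat * pk ((n:ℤ)-j).toNat) = G n ((n:ℤ)-j) * (pk j.toNat * pk ((n:ℤ)-j).toNat) := by
    rw [← mul_assoc, ← mul_assoc, f1]
    linear_combination -f2
  exact mul_right_cancel₀ hne this

lemma G_pascal2 (n : ℕ) (j : ℤ) :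
    G (n+2) j = tp (2*j) * G n j + (1 + tp (2*((n:ℤ)+1))) * G n (j-1)
      + tp (2*((n:ℤ)+2-j)) * G n (j-2) := by
  have h1 : G (n+2) j = G (n+1) j + tp (2*((n:ℤ)+2-j)) * G (n+1) (j-1) := by
    rw [G_rec1 (n+1) j, show ((((n:ℕ)+1:ℕ)):ℤ)+1-j = ((n:ℤ)+2-j) from by push_cast; ring]
  rw [h1, G_rec2 n j, G_rec2 n (j-1)]
  have key : tp (2*((n:ℤ)+2-j)) * tp (2*(j-1)) * G n (j-1) = tp (2*((n:ℤ)+1)) * G n (j-1) := by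
    rcases le_or_gt j 0 with hj | hj
    · rw [G_neg (show j - 1 < 0 by omega)]; ring
    rcases le_or_gt j ((n:ℤ)+2) with hj2 | hj2
    · rw [← tp_mul (a := 2*((n:ℤ)+2-j)) (b := 2*(j-1)) (by omega) (by omega),
        show 2*((n:ℤ)+2-j) + 2*(j-1) = 2*((n:ℤ)+1) from by ring]
    · rw [G_gt (show (n:ℤ) < j - 1 by omega)]; ring
  rw [show j-1-1 = j-2 from by ring]
  linear_combination key

lemma Xm_mul (a b : ℤ) : Xm a * Xm b = Xm (a+b) := by
  rw [Xm, Xm, Xm, ← map_mul, LaurentPolynomial.T_add]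

lemma Xm_zero : Xm 0 = 1 := by
  rw [Xm, LaurentPolynomial.T_zero, map_one]

/-- sign `(-1)^k` as an element of RJ -/
def sg (k : ℤ) : RJ := algebraMap ℚ RJ ((-1)^k)

lemma sg_succ (k : ℤ) : sg (k+1) = -sg k := by
  rw [sg, sg, zpow_add_one₀ (by norm_num), map_mul]
  simp

lemma sg_pred (k : ℤ) : sg (k-1) = -sg k := by
  have := sg_succ (k-1)
  rw [show k-1+1 = k from by ring] at this
  linear_combination this

/-- summand of the theta series -/
def w (k : ℤ) : RJ := ((-1 : ℚ) ^ k • Xm k) * (PowerSeries.X : RJ) ^ (k.natAbs ^ 2)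

lemma w_eq (k : ℤ) : w k = sg k * Xm k * tp (k^2) := by
  rw [w, Algebra.smul_def, sg, tp_eq (k^2) (k.natAbs^2) (Int.natAbs_sq k).symm]

/-- partial theta sum with Gaussian binomial weights -/
def Sf (m : ℕ) : RJ := ∑ k ∈ Finset.Icc (-(m:ℤ)) (m:ℤ), w k * G (2*m) ((m:ℤ) + k)

lemma Sf_extend (m : ℕ) : Sf m = ∑ k ∈ Finset.Icc (-((m:ℤ)+1)) ((m:ℤ)+1), w k * G (2*m) ((m:ℤ) + k) := by
  rw [Sf]
  refine Finset.sum_subset (fun x hx => ?_) (fun x hx hnx => ?_)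
  · simp only [Finset.mem_Icc] at hx ⊢; omega
  · simp only [Finset.mem_Icc] at hx hnx
    rcases le_or_gt x (-(m:ℤ)-1) with h | h
    · rw [G_neg (by omega)]; ring
    · rw [G_gt (by push_cast; omega)]; ring

lemma wshiftA (m : ℕ) (k : ℤ) (h1 : -(m:ℤ)-1 ≤ k) (h2 : k ≤ m) :
    w (k+1) * tp (2*((m:ℤ)-k)) = -(w k * Xm 1 * (PowerSeries.X : RJ)^(2*m+1)) := by
  rw [w_eq, w_eq, sg_succ, ← Xm_mul k 1,
    show ((PowerSeries.X : RJ))^(2*m+1) = tp (2*(m:ℤ)+1) from (tp_eq _ _ (by push_cast; ring)).symm]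
  have e : tp ((k+1)^2) * tp (2*((m:ℤ)-k)) = tp (k^2) * tp (2*(m:ℤ)+1) := by
    rw [← tp_mul (by positivity) (by omega), ← tp_mul (by positivity) (by omega)]
    congr 1; ring
  linear_combination (-(sg k * (Xm k * Xm 1))) * e

lemma wshiftB (m : ℕ) (k : ℤ) (h1 : -(m:ℤ) ≤ k) (h2 : k ≤ (m:ℤ)+1) :
    w (k-1) * tp (2*((m:ℤ)+k)) = -(w k * Xm (-1) * (PowerSeries.X : RJ)^(2*m+1)) := by
  rw [w_eq, w_eq, sg_pred, show k - 1 = k + (-1) from by ring, ← Xm_mul k (-1),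
    show ((PowerSeries.X : RJ))^(2*m+1) = tp (2*(m:ℤ)+1) from (tp_eq _ _ (by push_cast; ring)).symm]
  have e : tp ((k+(-1))^2) * tp (2*((m:ℤ)+k)) = tp (k^2) * tp (2*(m:ℤ)+1) := by
    rw [← tp_mul (by positivity) (by omega), ← tp_mul (by positivity) (by omega)]
    congr 1; ring
  linear_combination (-(sg k * (Xm k * Xm (-1)))) * e

lemma sumA (m : ℕ) :
    ∑ k ∈ Finset.Icc (-((m:ℤ)+1)) ((m:ℤ)+1), w k * tp (2*((m:ℤ)+1-k)) * G (2*m) ((m:ℤ)+k-1)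
      = -(Sf m * Xm 1 * (PowerSeries.X : RJ)^(2*m+1)) := by
  have step1 : -(Sf m * Xm 1 * (PowerSeries.X : RJ)^(2*m+1))
      = ∑ k ∈ Finset.Icc (-((m:ℤ)+1)) ((m:ℤ)), w (k+1) * tp (2*((m:ℤ)-k)) * G (2*m) ((m:ℤ)+k) := by
    rw [Sf, Finset.sum_mul, Finset.sum_mul, ← Finset.sum_neg_distrib]
    rw [(Finset.sum_subset (show Finset.Icc (-(m:ℤ)) ((m:ℤ)) ⊆ Finset.Icc (-((m:ℤ)+1)) ((m:ℤ)) from by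
          intro x hx; simp only [Finset.mem_Icc] at hx ⊢; omega)
        (fun x hx hnx => by
          simp only [Finset.mem_Icc] at hx hnx
          rw [G_neg (show (m:ℤ) + x < 0 from by omega)]; ring) :
        ∑ k ∈ Finset.Icc (-(m:ℤ)) ((m:ℤ)), w (k+1) * tp (2*((m:ℤ)-k)) * G (2*m) ((m:ℤ)+k)
          = ∑ k ∈ Finset.Icc (-((m:ℤ)+1)) ((m:ℤ)), w (k+1) * tp (2*((m:ℤ)-k)) * G (2*m) ((m:ℤ)+k)).symm]
    refine Finset.sum_congr rfl fun k hk => ?_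
    simp only [Finset.mem_Icc] at hk
    have := wshiftA m k (by omega) (by omega)
    linear_combination -(G (2*m) ((m:ℤ)+k)) * this
  rw [step1]
  rw [(Finset.sum_subset (show Finset.Icc (-(m:ℤ)) ((m:ℤ)+1) ⊆ Finset.Icc (-((m:ℤ)+1)) ((m:ℤ)+1) from by
        intro x hx; simp only [Finset.mem_Icc] at hx ⊢; omega)
      (fun x hx hnx => by
        simp only [Finset.mem_Icc] at hx hnx
        rw [G_neg (show (m:ℤ) + x - 1 < 0 from by omega)]; ring) :
      ∑ k ∈ Finset.Icc (-(m:ℤ)) ((m:ℤ)+1), w k * tp (2*((m:ℤ)+1-k)) * G (2*m) ((m:ℤ)+k-1)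
        = ∑ k ∈ Finset.Icc (-((m:ℤ)+1)) ((m:ℤ)+1), w k * tp (2*((m:ℤ)+1-k)) * G (2*m) ((m:ℤ)+k-1)).symm]
  refine Finset.sum_bij' (fun (k : ℤ) (_ : k ∈ Finset.Icc (-(m:ℤ)) ((m:ℤ)+1)) => k - 1)
    (fun (k : ℤ) (_ : k ∈ Finset.Icc (-((m:ℤ)+1)) ((m:ℤ))) => k + 1) ?_ ?_ ?_ ?_ ?_
  · intro a ha; simp only [Finset.mem_Icc] at ha ⊢; omega
  · intro a ha; simp only [Finset.mem_Icc] at ha ⊢; omega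
  · intro a _; ring
  · intro a _; ring
  · intro a _
    rw [show a - 1 + 1 = a from by ring, show (m:ℤ) - (a - 1) = (m:ℤ) + 1 - a from by ring,
      show (m:ℤ) + (a - 1) = (m:ℤ) + a - 1 from by ring]

lemma sumB (m : ℕ) :
    ∑ k ∈ Finset.Icc (-((m:ℤ)+1)) ((m:ℤ)+1), w k * tp (2*((m:ℤ)+1+k)) * G (2*m) ((m:ℤ)+k+1)
      = -(Sf m * Xm (-1) * (PowerSeries.X : RJ)^(2*m+1)) := by
  have step1 : -(Sf m * Xm (-1) * (PowerSeries.X : RJ)^(2*m+1))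
      = ∑ k ∈ Finset.Icc (-(m:ℤ)) ((m:ℤ)+1), w (k-1) * tp (2*((m:ℤ)+k)) * G (2*m) ((m:ℤ)+k) := by
    rw [Sf, Finset.sum_mul, Finset.sum_mul, ← Finset.sum_neg_distrib]
    rw [(Finset.sum_subset (show Finset.Icc (-(m:ℤ)) ((m:ℤ)) ⊆ Finset.Icc (-(m:ℤ)) ((m:ℤ)+1) from by
          intro x hx; simp only [Finset.mem_Icc] at hx ⊢; omega)
        (fun x hx hnx => by
          simp only [Finset.mem_Icc] at hx hnx
          rw [G_gt (show ((2*m : ℕ):ℤ) < (m:ℤ) + x from by push_cast; omega)]; ring) :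
        ∑ k ∈ Finset.Icc (-(m:ℤ)) ((m:ℤ)), w (k-1) * tp (2*((m:ℤ)+k)) * G (2*m) ((m:ℤ)+k)
          = ∑ k ∈ Finset.Icc (-(m:ℤ)) ((m:ℤ)+1), w (k-1) * tp (2*((m:ℤ)+k)) * G (2*m) ((m:ℤ)+k)).symm]
    refine Finset.sum_congr rfl fun k hk => ?_
    simp only [Finset.mem_Icc] at hk
    have := wshiftB m k (by omega) (by omega)
    linear_combination -(G (2*m) ((m:ℤ)+k)) * this
  rw [step1]
  rw [(Finset.sum_subset (show Finset.Icc (-((m:ℤ)+1)) ((m:ℤ)) ⊆ Finset.Icc (-((m:ℤ)+1)) ((m:ℤ)+1) from by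
        intro x hx; simp only [Finset.mem_Icc] at hx ⊢; omega)
      (fun x hx hnx => by
        simp only [Finset.mem_Icc] at hx hnx
        rw [G_gt (show ((2*m : ℕ):ℤ) < (m:ℤ) + x + 1 from by push_cast; omega)]; ring) :
      ∑ k ∈ Finset.Icc (-((m:ℤ)+1)) ((m:ℤ)), w k * tp (2*((m:ℤ)+1+k)) * G (2*m) ((m:ℤ)+k+1)
        = ∑ k ∈ Finset.Icc (-((m:ℤ)+1)) ((m:ℤ)+1), w k * tp (2*((m:ℤ)+1+k)) * G (2*m) ((m:ℤ)+k+1)).symm]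
  refine Finset.sum_bij' (fun (k : ℤ) (_ : k ∈ Finset.Icc (-((m:ℤ)+1)) ((m:ℤ))) => k + 1)
    (fun (k : ℤ) (_ : k ∈ Finset.Icc (-(m:ℤ)) ((m:ℤ)+1)) => k - 1) ?_ ?_ ?_ ?_ ?_
  · intro a ha; simp only [Finset.mem_Icc] at ha ⊢; omega
  · intro a ha; simp only [Finset.mem_Icc] at ha ⊢; omega
  · intro a _; ring
  · intro a _; ring
  · intro a _
    rw [show a + 1 - 1 = a from by ring, show (m:ℤ) + (a + 1) = (m:ℤ) + a + 1 from by ring,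
      show (m:ℤ) + 1 + a = (m:ℤ) + a + 1 from by ring]

lemma sumC (m : ℕ) :
    ∑ k ∈ Finset.Icc (-((m:ℤ)+1)) ((m:ℤ)+1), w k * (1 + tp (2*(2*(m:ℤ)+1))) * G (2*m) ((m:ℤ)+k)
      = Sf m * (1 + (PowerSeries.X : RJ)^(4*m+2)) := by
  rw [Sf_extend, Finset.sum_mul]
  refine Finset.sum_congr rfl fun k hk => ?_
  rw [show ((PowerSeries.X : RJ))^(4*m+2) = tp (2*(2*(m:ℤ)+1)) from (tp_eq _ _ (by push_cast; ring)).symm]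
  ring

lemma JTPfin (m : ℕ) :
    (∏ j ∈ Finset.range m, (1 - Xm (-1) * (PowerSeries.X : RJ)^(2*j+1))) *
    (∏ j ∈ Finset.range m, (1 - Xm 1 * (PowerSeries.X : RJ)^(2*j+1))) = Sf m := by
  induction m with
  | zero =>
    norm_num [Sf, w, Xm_zero]
    exact G_zero.symm
  | succ m ih =>
    rw [Finset.prod_range_succ, Finset.prod_range_succ]
    have h1 : Xm (-1) * Xm 1 = 1 := by rw [Xm_mul]; norm_num [Xm_zero]
    have h2 : (PowerSeries.X : RJ)^(2*m+1) * (PowerSeries.X : RJ)^(2*m+1)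
        = (PowerSeries.X : RJ)^(4*m+2) := by rw [← pow_add]; congr 1; omega
    have key : Sf (m+1) = Sf m * (1 + (PowerSeries.X : RJ)^(4*m+2))
        + (-(Sf m * Xm 1 * (PowerSeries.X : RJ)^(2*m+1)))
        + (-(Sf m * Xm (-1) * (PowerSeries.X : RJ)^(2*m+1))) := by
      rw [← sumA, ← sumB, ← sumC, ← Finset.sum_add_distrib, ← Finset.sum_add_distrib]
      have hSf : Sf (m+1) = ∑ k ∈ Finset.Icc (-((m:ℤ)+1)) ((m:ℤ)+1), w k * G (2*m+2) ((m:ℤ)+1+k) := by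
        have hset : Finset.Icc (-((m+1:ℕ):ℤ)) ((m+1:ℕ):ℤ) = Finset.Icc (-((m:ℤ)+1)) ((m:ℤ)+1) := by
          norm_num
        rw [Sf, hset, show 2*(m+1) = 2*m+2 from by ring]
        refine Finset.sum_congr rfl fun k _ => ?_
        rw [show ((m+1:ℕ):ℤ) + k = (m:ℤ)+1+k from by push_cast; ring]
      rw [hSf]
      refine Finset.sum_congr rfl fun k _ => ?_
      have hp := G_pascal2 (2*m) ((m:ℤ)+1+k)
      push_cast at hp
      rw [show (m:ℤ)+1+k-1 = (m:ℤ)+k from by ring,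
        show (m:ℤ)+1+k-2 = (m:ℤ)+k-1 from by ring,
        show 2*(2*(m:ℤ)+2-((m:ℤ)+1+k)) = 2*((m:ℤ)+1-k) from by ring] at hp
      rw [show (m:ℤ)+k+1 = (m:ℤ)+1+k from by ring]
      linear_combination w k * hp
    rw [key]
    linear_combination ((1 - Xm (-1) * (PowerSeries.X : RJ)^(2*m+1)) * (1 - Xm 1 * (PowerSeries.X : RJ)^(2*m+1))) * ih
      + Sf m * (PowerSeries.X : RJ)^(2*m+1) * (PowerSeries.X : RJ)^(2*m+1) * h1 + Sf m * h2

lemma D1 (m : ℕ) (k : ℤ) (hk0 : 0 ≤ k) (hkm : k ≤ m) :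
    pk m * G (2*m) ((m:ℤ)+k) =
      (∏ j ∈ Finset.Ico ((m:ℤ)-k).toNat m, (1 - (PowerSeries.X : RJ)^(2*(j+1)))) *
      (∏ j ∈ Finset.Ico ((m:ℤ)+k).toNat (2*m), (1 - (PowerSeries.X : RJ)^(2*(j+1)))) := by
  have hfact := G_fact (2*m) ((m:ℤ)+k) (by omega) (by push_cast; omega)
  rw [show (((2*m:ℕ):ℤ) - ((m:ℤ)+k)).toNat = ((m:ℤ)-k).toNat from by omega] at hfact
  have hne : pk (((m:ℤ)+k).toNat) * pk (((m:ℤ)-k).toNat) ≠ 0 :=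
    mul_ne_zero (pk_ne_zero _) (pk_ne_zero _)
  apply mul_right_cancel₀ hne
  have e1 : pk (((m:ℤ)-k).toNat) * ∏ j ∈ Finset.Ico ((m:ℤ)-k).toNat m, (1 - (PowerSeries.X : RJ)^(2*(j+1))) = pk m := by
    rw [pk, pk, Finset.prod_range_mul_prod_Ico _ (show ((m:ℤ)-k).toNat ≤ m from by omega)]
  have e2 : pk (((m:ℤ)+k).toNat) * ∏ j ∈ Finset.Ico ((m:ℤ)+k).toNat (2*m), (1 - (PowerSeries.X : RJ)^(2*(j+1))) = pk (2*m) := by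
    rw [pk, pk, Finset.prod_range_mul_prod_Ico _ (show ((m:ℤ)+k).toNat ≤ 2*m from by omega)]
  calc pk m * G (2*m) ((m:ℤ)+k) * (pk (((m:ℤ)+k).toNat) * pk (((m:ℤ)-k).toNat))
      = pk m * (G (2*m) ((m:ℤ)+k) * pk (((m:ℤ)+k).toNat) * pk (((m:ℤ)-k).toNat)) := by ring
    _ = pk m * pk (2*m) := by rw [hfact]
    _ = _ := by rw [← e1, ← e2]; ring

lemma D2 (m : ℕ) (k : ℤ) (hk0 : 0 ≤ k) (hkm : k ≤ m) :
    (PowerSeries.X : RJ)^(2*((m:ℤ)-k).toNat + 2) ∣ pk m * G (2*m) ((m:ℤ)+k) - 1 := by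
  rw [D1 m k hk0 hkm]
  set d := (PowerSeries.X : RJ)^(2*((m:ℤ)-k).toNat + 2) with hd
  have hdvd : ∀ (a b : ℕ), ((m:ℤ)-k).toNat ≤ a →
      ∀ j ∈ Finset.Ico a b, d ∣ (1 - (PowerSeries.X : RJ)^(2*(j+1))) - 1 := by
    intro a b ha j hj
    simp only [Finset.mem_Ico] at hj
    rw [show (1 - (PowerSeries.X : RJ)^(2*(j+1))) - 1 = (-1) * (PowerSeries.X : RJ)^(2*(j+1)) from by ring]
    exact (pow_dvd_pow (PowerSeries.X : RJ) (show 2*((m:ℤ)-k).toNat + 2 ≤ 2*(j+1) from by omega)).mul_left (-1)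
  have hP1 : d ∣ (∏ j ∈ Finset.Ico ((m:ℤ)-k).toNat m, (1 - (PowerSeries.X : RJ)^(2*(j+1)))) - 1 :=
    prod_sub_one_dvd _ _ _ (hdvd _ _ le_rfl)
  have hP2 : d ∣ (∏ j ∈ Finset.Ico ((m:ℤ)+k).toNat (2*m), (1 - (PowerSeries.X : RJ)^(2*(j+1)))) - 1 :=
    prod_sub_one_dvd _ _ _ (hdvd _ _ (by omega))
  set P1 := ∏ j ∈ Finset.Ico ((m:ℤ)-k).toNat m, (1 - (PowerSeries.X : RJ)^(2*(j+1)))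
  set P2 := ∏ j ∈ Finset.Ico ((m:ℤ)+k).toNat (2*m), (1 - (PowerSeries.X : RJ)^(2*(j+1)))
  have : P1 * P2 - 1 = (P1 - 1) * P2 + (P2 - 1) := by ring
  rw [this]
  exact dvd_add (hP1.mul_right _) hP2

lemma D3 (m : ℕ) (k : ℤ) (hk : k.natAbs ≤ m) :
    (PowerSeries.X : RJ)^(2*m+1) ∣ w k * (pk m * G (2*m) ((m:ℤ)+k)) - w k := by
  set a := k.natAbs with ha
  have hG : G (2*m) ((m:ℤ)+k) = G (2*m) ((m:ℤ)+(a:ℤ)) := by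
    rcases le_or_gt 0 k with h | h
    · rw [show ((a:ℤ)) = k from by omega]
    · rw [G_symm (show (0:ℤ) ≤ (m:ℤ)+k from by omega) (show (m:ℤ)+k ≤ ((2*m:ℕ):ℤ) from by push_cast; omega),
        show ((2*m:ℕ):ℤ) - ((m:ℤ)+k) = (m:ℤ)+(a:ℤ) from by push_cast; omega]
  rw [hG]
  have hD := D2 m (a:ℤ) (by omega) (by omega)
  rw [show (((m:ℤ)-(a:ℤ))).toNat = m - a from by omega] at hD
  have key : w k * (pk m * G (2*m) ((m:ℤ)+(a:ℤ))) - w k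
      = sg k * Xm k * (tp (k^2) * (pk m * G (2*m) ((m:ℤ)+(a:ℤ)) - 1)) := by
    rw [w_eq]; ring
  rw [key]
  have h1 : (PowerSeries.X : RJ)^(a^2 + (2*(m-a)+2)) ∣ tp (k^2) * (pk m * G (2*m) ((m:ℤ)+(a:ℤ)) - 1) := by
    rw [pow_add, show tp (k^2) = (PowerSeries.X : RJ)^(a^2) from tp_eq _ _ (by rw [ha, ← Int.natAbs_sq]; push_cast; ring)]
    exact mul_dvd_mul dvd_rfl hD
  have hle : 2*m+1 ≤ a^2 + (2*(m-a)+2) := by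
    have : (2*(a:ℤ)) ≤ (a:ℤ)^2 + 1 := by nlinarith [sq_nonneg ((a:ℤ)-1)]
    have h2 : 2*a ≤ a^2 + 1 := by push_cast at this ⊢; exact_mod_cast this
    have h3 : a^2 = a*a := sq a
    omega
  exact dvd_trans (pow_dvd_pow _ hle) (h1.mul_left _)

lemma w_coeff_zero {n : ℕ} {k : ℤ} (h : n < k.natAbs^2) :
    (PowerSeries.coeff n) (w k) = 0 := by
  have : (PowerSeries.X : RJ)^(k.natAbs^2) ∣ w k := Dvd.intro_left _ rfl
  exact PowerSeries.X_pow_dvd_iff.mp this n h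


lemma partial_dvd_mk {f : ℕ → RJ} (h : ∀ j, (PowerSeries.X : RJ) ^ (j + 1) ∣ (f j - 1))
    (m n : ℕ) (hmn : n + 1 ≤ m) :
    (PowerSeries.X : RJ)^(n+1) ∣
      (PowerSeries.mk fun i => (PowerSeries.coeff i)
        (∏ j ∈ Finset.range (i+1), f j)) - ∏ j ∈ Finset.range m, f j := by
  rw [PowerSeries.X_pow_dvd_iff]
  intro i hi
  rw [map_sub, PowerSeries.coeff_mk]
  have hd := prod_partial_dvd h (F := Finset.range m) (n := i)
    (by intro x hx; simp only [Finset.mem_range] at hx ⊢; omega)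
  have := PowerSeries.X_pow_dvd_iff.mp hd i (lt_add_one i)
  rw [map_sub] at this
  linear_combination -this

lemma coeff_eq_of_dvd {a b : RJ} {n : ℕ} (h : (PowerSeries.X : RJ)^(n+1) ∣ a - b) :
    (PowerSeries.coeff n) a = (PowerSeries.coeff n) b := by
  have := PowerSeries.X_pow_dvd_iff.mp h n (lt_add_one n)
  rw [map_sub] at this
  exact sub_eq_zero.mp this

/-- The Jacobi triple product identity, with `q = t²` so that all exponents are integral:
$\sum_{k\in\mathbb{Z}} (-1)^k t^{k^2} x^k
  = (t^2;t^2)_\infty\,(t/x;t^2)_\infty\,(tx;t^2)_\infty$. -/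
theorem jacobi_triple_product :
    ∑' k : ℤ, ((-1 : ℚ) ^ k • Xm k) * (PowerSeries.X : RJ) ^ (k.natAbs ^ 2) =
      (∏' j : ℕ, (1 - (PowerSeries.X : RJ) ^ (2 * j + 2))) *
        (∏' j : ℕ, (1 - Xm (-1) * (PowerSeries.X : RJ) ^ (2 * j + 1))) *
        (∏' j : ℕ, (1 - Xm 1 * (PowerSeries.X : RJ) ^ (2 * j + 1))) := by
  classical
  show (∑' k : ℤ, w k) = _
  have hco : ∀ (n : ℕ) (k : ℤ), k ∉ Finset.Icc (-(n:ℤ)) (n:ℤ) →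
      (PowerSeries.coeff n) (w k) = 0 := by
    intro n k hk
    apply w_coeff_zero
    simp only [Finset.mem_Icc, not_and_or, not_le] at hk
    have h1 : n + 1 ≤ k.natAbs := by omega
    have h2 : k.natAbs ≤ k.natAbs ^ 2 := Nat.le_self_pow (by norm_num) _
    omega
  have hsum : HasSum w (PowerSeries.mk fun n => ∑ k ∈ Finset.Icc (-(n:ℤ)) (n:ℤ),
      (PowerSeries.coeff n) (w k)) := rj_hasSum hco
  have hA : ∀ j : ℕ, (PowerSeries.X : RJ)^(j+1) ∣ (1 - (PowerSeries.X : RJ)^(2*j+2)) - 1 := fun j =>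
    ⟨-((PowerSeries.X : RJ)^(j+1)), by rw [show 2*j+2 = (j+1)+(j+1) from by ring, pow_add]; ring⟩
  have hB : ∀ j : ℕ, (PowerSeries.X : RJ)^(j+1) ∣ (1 - Xm (-1) * (PowerSeries.X : RJ)^(2*j+1)) - 1 := fun j =>
    ⟨-(Xm (-1) * (PowerSeries.X : RJ)^j), by rw [show 2*j+1 = (j+1)+j from by ring, pow_add]; ring⟩
  have hC : ∀ j : ℕ, (PowerSeries.X : RJ)^(j+1) ∣ (1 - Xm 1 * (PowerSeries.X : RJ)^(2*j+1)) - 1 := fun j =>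
    ⟨-(Xm 1 * (PowerSeries.X : RJ)^j), by rw [show 2*j+1 = (j+1)+j from by ring, pow_add]; ring⟩
  have hPA := rj_hasProd hA
  have hPB := rj_hasProd hB
  have hPC := rj_hasProd hC
  rw [hsum.tsum_eq, hPA.tprod_eq, hPB.tprod_eq, hPC.tprod_eq]
  refine PowerSeries.ext fun n => ?_
  rw [PowerSeries.coeff_mk]
  set m := n + 1 with hm
  set SA := PowerSeries.mk fun i => (PowerSeries.coeff i)
    (∏ j ∈ Finset.range (i+1), (1 - (PowerSeries.X : RJ)^(2*j+2))) with hSA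
  set SB := PowerSeries.mk fun i => (PowerSeries.coeff i)
    (∏ j ∈ Finset.range (i+1), (1 - Xm (-1) * (PowerSeries.X : RJ)^(2*j+1))) with hSB
  set SC := PowerSeries.mk fun i => (PowerSeries.coeff i)
    (∏ j ∈ Finset.range (i+1), (1 - Xm 1 * (PowerSeries.X : RJ)^(2*j+1))) with hSC
  set BP := ∏ j ∈ Finset.range m, (1 - Xm (-1) * (PowerSeries.X : RJ)^(2*j+1)) with hBP
  set CP := ∏ j ∈ Finset.range m, (1 - Xm 1 * (PowerSeries.X : RJ)^(2*j+1)) with hCP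
  have hpk : pk m = ∏ j ∈ Finset.range m, (1 - (PowerSeries.X : RJ)^(2*j+2)) :=
    Finset.prod_congr rfl fun j _ => by rw [show 2*(j+1) = 2*j+2 from by ring]
  -- the three partial-product congruences
  have hPAc : (PowerSeries.X : RJ)^(n+1) ∣ SA - pk m := by
    rw [hpk]; exact partial_dvd_mk hA m n (le_refl _)
  have hPBc : (PowerSeries.X : RJ)^(n+1) ∣ SB - BP := partial_dvd_mk hB m n (le_refl _)
  have hPCc : (PowerSeries.X : RJ)^(n+1) ∣ SC - CP := partial_dvd_mk hC m n (le_refl _)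
  have hRHS : (PowerSeries.X : RJ)^(n+1) ∣ SA * SB * SC - pk m * (BP * CP) := by
    have e : SA * SB * SC - pk m * (BP * CP)
        = (SA - pk m) * SB * SC + pk m * ((SB - BP) * SC) + pk m * (BP * (SC - CP)) := by ring
    rw [e]
    exact dvd_add (dvd_add ((hPAc.mul_right _).mul_right _)
      (((hPBc.mul_right _)).mul_left _)) ((hPCc.mul_left _).mul_left _)
  -- the sum side
  have stepA : ∑ k ∈ Finset.Icc (-(n:ℤ)) (n:ℤ), (PowerSeries.coeff n) (w k)
      = ∑ k ∈ Finset.Icc (-(m:ℤ)) (m:ℤ), (PowerSeries.coeff n) (w k) := by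
    refine Finset.sum_subset (fun x hx => ?_) (fun x hx hnx => ?_)
    · simp only [Finset.mem_Icc] at hx ⊢; push_cast [hm]; omega
    · simp only [Finset.mem_Icc, hm] at hx hnx
      apply w_coeff_zero
      have h1 : n + 1 ≤ x.natAbs := by push_cast at hx hnx; omega
      have h2 : x.natAbs ≤ x.natAbs ^ 2 := Nat.le_self_pow (by norm_num) _
      omega
  have hL3 : pk m * Sf m = ∑ k ∈ Finset.Icc (-(m:ℤ)) (m:ℤ), w k * (pk m * G (2*m) ((m:ℤ)+k)) := by
    rw [Sf, Finset.mul_sum]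
    exact Finset.sum_congr rfl fun k _ => by ring
  have stepC : (PowerSeries.X : RJ)^(n+1) ∣ (∑ k ∈ Finset.Icc (-(m:ℤ)) (m:ℤ), w k) - pk m * Sf m := by
    rw [hL3, ← Finset.sum_sub_distrib]
    refine Finset.dvd_sum fun k hk => ?_
    simp only [Finset.mem_Icc] at hk
    have := D3 m k (by omega)
    have hd : (PowerSeries.X : RJ)^(n+1) ∣ w k * (pk m * G (2*m) ((m:ℤ)+k)) - w k :=
      (pow_dvd_pow _ (show n + 1 ≤ 2*m+1 from by omega)).trans this
    have e : w k - w k * (pk m * G (2*m) ((m:ℤ)+k))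
        = -(w k * (pk m * G (2*m) ((m:ℤ)+k)) - w k) := by ring
    rw [e]
    exact hd.neg_right
  calc ∑ k ∈ Finset.Icc (-(n:ℤ)) (n:ℤ), (PowerSeries.coeff n) (w k)
      = ∑ k ∈ Finset.Icc (-(m:ℤ)) (m:ℤ), (PowerSeries.coeff n) (w k) := stepA
    _ = (PowerSeries.coeff n) (∑ k ∈ Finset.Icc (-(m:ℤ)) (m:ℤ), w k) :=
        (map_sum _ _ _).symm
    _ = (PowerSeries.coeff n) (pk m * Sf m) := coeff_eq_of_dvd stepC
    _ = (PowerSeries.coeff n) (pk m * (BP * CP)) := by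
        rw [← JTPfin m, hBP, hCP]
    _ = (PowerSeries.coeff n) (SA * SB * SC) :=
        (coeff_eq_of_dvd hRHS).symm
end
end

section
/- Slater's identity (83) holds: (q;q)_\infty \sum_{n=0}^{\infty} \frac{q^{2n^2}}{(q;q)_{2n}} = (q;q^8)_\infty (q^7;q^8)_\infty (q^8;q^8)_\infty (q^6;q^{16})_\infty (q^{10};q^{16})_\infty, as formal power series in q. -/
noncomputable section

/-- The $q$-Pochhammer symbol $(a;q)_n = \prod_{j=1}^{n}(1 - a q^{j-1})$. -/
def qPoch {R : Type*} [CommRing R] (a q : R) (n : ℕ) : R :=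
  ∏ k ∈ Finset.range n, (1 - a * q ^ k)

local notation "Q" => (PowerSeries.X : PowerSeries ℚ)

namespace Slater

open PowerSeries Filter Finset Topology

abbrev PS := PowerSeries ℚ

lemma isEmbedding_coeffs :
    Topology.IsEmbedding (fun (f : PS) (n : ℕ) => (coeff n) f) := by
  refine ⟨⟨rfl⟩, fun a b hab => PowerSeries.ext fun n => congrFun hab n⟩

instance : T2Space PS := isEmbedding_coeffs.t2Space

lemma tendsto_nhds_iff {α : Type*} {l : Filter α} {F : α → PS} {L : PS} :
    Tendsto F l (nhds L) ↔ ∀ n : ℕ, Tendsto (fun a => coeff n (F a)) l (nhds (coeff n L)) := by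
  rw [show (nhds L) = _ from nhds_induced (fun (f : PS) (n : ℕ) => (coeff n) f) L,
    tendsto_comap_iff, tendsto_pi_nhds]
  exact Iff.rfl

/-- A net of partial "aggregates" stabilizes coefficientwise to `L`. -/
def Stab {ι : Type*} (F : Finset ι → PS) (L : PS) : Prop :=
  ∀ d : ℕ, ∃ s₀ : Finset ι, ∀ s : Finset ι, s₀ ⊆ s → ∀ j ≤ d, coeff j (F s) = coeff j L

lemma Stab.unique {ι : Type*} [DecidableEq ι] {F : Finset ι → PS} {L M : PS}
    (h : Stab F L) (h' : Stab F M) : L = M := by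
  ext d
  obtain ⟨s, hs⟩ := h d
  obtain ⟨t, ht⟩ := h' d
  rw [← hs (s ∪ t) subset_union_left d le_rfl, ht (s ∪ t) subset_union_right d le_rfl]

def StabProd {ι : Type*} (f : ι → PS) (L : PS) : Prop := Stab (fun s => ∏ i ∈ s, f i) L

def StabSum {ι : Type*} (f : ι → PS) (L : PS) : Prop := Stab (fun s => ∑ i ∈ s, f i) L

lemma Stab.tendsto {ι : Type*} {F : Finset ι → PS} {L : PS} (h : Stab F L) :
    Tendsto F atTop (nhds L) := by
  rw [tendsto_nhds_iff]
  intro n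
  obtain ⟨s₀, hs⟩ := h n
  exact Tendsto.congr' (eventually_atTop.2 ⟨s₀, fun s hs' => (hs s hs' n le_rfl).symm⟩)
    tendsto_const_nhds

lemma StabProd.hasProd {ι : Type*} {f : ι → PS} {L : PS} (h : StabProd f L) : HasProd f L :=
  Stab.tendsto h

lemma StabSum.hasSum {ι : Type*} {f : ι → PS} {L : PS} (h : StabSum f L) : HasSum f L :=
  Stab.tendsto h

lemma StabProd.tprod_eq {ι : Type*} {f : ι → PS} {L : PS} (h : StabProd f L) : ∏' i, f i = L :=
  h.hasProd.tprod_eq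

lemma StabSum.tsum_eq {ι : Type*} {f : ι → PS} {L : PS} (h : StabSum f L) : ∑' i, f i = L :=
  h.hasSum.tsum_eq

lemma coeff_mul_window {A A' B B' : PS} {d : ℕ} (hA : ∀ j ≤ d, coeff j A = coeff j A')
    (hB : ∀ j ≤ d, coeff j B = coeff j B') :
    ∀ j ≤ d, coeff j (A * B) = coeff j (A' * B') := by
  intro j hj
  rw [PowerSeries.coeff_mul, PowerSeries.coeff_mul]
  refine Finset.sum_congr rfl fun p hp => ?_
  rw [Finset.HasAntidiagonal.mem_antidiagonal] at hp
  rw [hA p.1 (by omega), hB p.2 (by omega)]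

lemma StabProd.mul {ι : Type*} [DecidableEq ι] {f g : ι → PS} {L M : PS}
    (hf : StabProd f L) (hg : StabProd g M) : StabProd (fun i => f i * g i) (L * M) := by
  intro d
  obtain ⟨s₁, h₁⟩ := hf d
  obtain ⟨s₂, h₂⟩ := hg d
  refine ⟨s₁ ∪ s₂, fun s hs j hj => ?_⟩
  simp only
  rw [Finset.prod_mul_distrib]
  exact coeff_mul_window (h₁ s (subset_union_left.trans hs))
    (h₂ s (subset_union_right.trans hs)) j hj

lemma StabSum.add {ι : Type*} [DecidableEq ι] {f g : ι → PS} {L M : PS}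
    (hf : StabSum f L) (hg : StabSum g M) : StabSum (fun i => f i + g i) (L + M) := by
  intro d
  obtain ⟨s₁, h₁⟩ := hf d
  obtain ⟨s₂, h₂⟩ := hg d
  refine ⟨s₁ ∪ s₂, fun s hs j hj => ?_⟩
  simp only
  rw [Finset.sum_add_distrib, map_add, map_add,
    h₁ s (subset_union_left.trans hs) j hj, h₂ s (subset_union_right.trans hs) j hj]

lemma StabSum.mul_left {ι : Type*} {f : ι → PS} {L : PS} (c : PS)
    (hf : StabSum f L) : StabSum (fun i => c * f i) (c * L) := by
  intro d
  obtain ⟨s₁, h₁⟩ := hf d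
  refine ⟨s₁, fun s hs j hj => ?_⟩
  simp only
  rw [← Finset.mul_sum]
  exact coeff_mul_window (fun _ _ => rfl) (h₁ s hs) j hj

lemma StabProd.congr {ι : Type*} {f g : ι → PS} {L : PS}
    (h : StabProd f L) (hfg : ∀ i, f i = g i) : StabProd g L := by
  have : f = g := funext hfg
  rwa [← this]

lemma StabSum.congr {ι : Type*} {f g : ι → PS} {L : PS}
    (h : StabSum f L) (hfg : ∀ i, f i = g i) : StabSum g L := by
  have : f = g := funext hfg
  rwa [← this]

/-- `A` agrees with 1 in coefficients `≤ d`. -/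
def oneUpto (d : ℕ) (A : PS) : Prop := ∀ j ≤ d, coeff j A = coeff j 1

lemma oneUpto.mul {d : ℕ} {A B : PS} (hA : oneUpto d A) (hB : oneUpto d B) :
    oneUpto d (A * B) := by
  intro j hj
  have := coeff_mul_window hA hB j hj
  rwa [one_mul] at this

lemma oneUpto_one (d : ℕ) : oneUpto d 1 := fun _ _ => rfl

lemma oneUpto_prod {ι : Type*} [DecidableEq ι] {d : ℕ} (s : Finset ι) (f : ι → PS)
    (h : ∀ i ∈ s, oneUpto d (f i)) : oneUpto d (∏ i ∈ s, f i) := by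
  induction s using Finset.induction_on with
  | empty => simpa using oneUpto_one d
  | insert _ _ hx ih =>
    rename_i a t
    rw [Finset.prod_insert hx]
    exact (h a (mem_insert_self a t)).mul (ih fun i hi => h i (mem_insert_of_mem hi))

lemma oneUpto_of_lt {d e : ℕ} (c : ℚ) (hde : d < e) : oneUpto d (1 + PowerSeries.C c * X ^ e) := by
  intro j hj
  rw [map_add, PowerSeries.coeff_one, PowerSeries.coeff_C_mul, PowerSeries.coeff_X_pow,
    if_neg (by omega : ¬ j = e)]
  simp [PowerSeries.coeff_one]



/-- `f k ≡ 1` in coefficients `≤ k`. -/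
def Nice (f : ℕ → PS) : Prop := ∀ k, oneUpto k (f k)

def plim (f : ℕ → PS) : PS := PowerSeries.mk fun d => coeff d (∏ k ∈ range (d+1), f k)

lemma coeff_prod_stable {f : ℕ → PS} (hf : Nice f) {s : Finset ℕ} {j : ℕ}
    (hs : range (j+1) ⊆ s) :
    coeff j (∏ k ∈ s, f k) = coeff j (∏ k ∈ range (j+1), f k) := by
  rw [← Finset.prod_sdiff hs]
  have h1 : oneUpto j (∏ k ∈ s \ range (j+1), f k) := by
    apply oneUpto_prod
    intro i hi
    have hge : j + 1 ≤ i := by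
      have := (Finset.mem_sdiff.mp hi).2
      simpa using this
    intro j' hj'
    exact hf i j' (by omega)
  calc coeff j ((∏ x ∈ s \ range (j+1), f x) * ∏ x ∈ range (j+1), f x)
      = coeff j ((1 : PS) * ∏ x ∈ range (j+1), f x) :=
        coeff_mul_window h1 (fun _ _ => rfl) j le_rfl
    _ = _ := by rw [one_mul]

lemma Nice.stabProd {f : ℕ → PS} (hf : Nice f) : StabProd f (plim f) := by
  intro d
  refine ⟨range (d+1), fun s hs j hj => ?_⟩
  simp only
  rw [coeff_prod_stable hf ((Finset.range_subset_range.2 (by omega)).trans hs), plim, coeff_mk]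

def NiceS (f : ℕ → PS) : Prop := ∀ n, ∀ j < n, coeff j (f n) = 0

def slim (f : ℕ → PS) : PS := PowerSeries.mk fun d => coeff d (∑ n ∈ range (d+1), f n)

lemma coeff_sum_stable {f : ℕ → PS} (hf : NiceS f) {s : Finset ℕ} {j : ℕ}
    (hs : range (j+1) ⊆ s) :
    coeff j (∑ k ∈ s, f k) = coeff j (∑ k ∈ range (j+1), f k) := by
  rw [← Finset.sum_sdiff hs, map_add, map_sum]
  have : ∀ i ∈ s \ range (j+1), coeff j (f i) = 0 := by
    intro i hi
    have hge : j + 1 ≤ i := by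
      have := (Finset.mem_sdiff.mp hi).2
      simpa using this
    exact hf i j (by omega)
  rw [Finset.sum_eq_zero this, zero_add]

lemma NiceS.stabSum {f : ℕ → PS} (hf : NiceS f) : StabSum f (slim f) := by
  intro d
  refine ⟨range (d+1), fun s hs j hj => ?_⟩
  simp only
  rw [coeff_sum_stable hf ((Finset.range_subset_range.2 (by omega)).trans hs), slim, coeff_mk]

def NiceZ (f : ℤ → PS) : Prop := ∀ i : ℤ, ∀ j : ℕ, (j : ℤ) < |i| → coeff j (f i) = 0

def slimZ (f : ℤ → PS) : PS :=
  PowerSeries.mk fun d => coeff d (∑ i ∈ Finset.Icc (-(d : ℤ)) d, f i)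

lemma coeff_sumZ_stable {f : ℤ → PS} (hf : NiceZ f) {s : Finset ℤ} {j : ℕ}
    (hs : Finset.Icc (-(j : ℤ)) j ⊆ s) :
    coeff j (∑ i ∈ s, f i) = coeff j (∑ i ∈ Finset.Icc (-(j : ℤ)) j, f i) := by
  rw [← Finset.sum_sdiff hs, map_add, map_sum]
  have : ∀ i ∈ s \ Finset.Icc (-(j : ℤ)) j, coeff j (f i) = 0 := by
    intro i hi
    have hni := (Finset.mem_sdiff.mp hi).2
    rw [Finset.mem_Icc] at hni
    refine hf i j (lt_abs.2 ?_)
    omega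
  rw [Finset.sum_eq_zero this, zero_add]

lemma NiceZ.stabSum {f : ℤ → PS} (hf : NiceZ f) : StabSum f (slimZ f) := by
  intro d
  refine ⟨Finset.Icc (-(d : ℤ)) d, fun s hs j hj => ?_⟩
  simp only
  have hsub : Finset.Icc (-(j : ℤ)) j ⊆ Finset.Icc (-(d : ℤ)) d := by
    intro x hx
    rw [Finset.mem_Icc] at *
    omega
  rw [coeff_sumZ_stable hf (hsub.trans hs), slimZ, coeff_mk]

lemma StabProd.interleave {f g h : ℕ → PS} {L M : PS}
    (hfh : ∀ k, h (2*k) = f k) (hgh : ∀ k, h (2*k+1) = g k)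
    (hf : StabProd f L) (hg : StabProd g M) : StabProd h (L * M) := by
  intro d
  obtain ⟨s₁, h₁⟩ := hf d
  obtain ⟨s₂, h₂⟩ := hg d
  refine ⟨s₁.image (fun k => 2*k) ∪ s₂.image (fun k => 2*k+1), fun s hs j hj => ?_⟩
  simp only
  rw [← Finset.prod_filter_mul_prod_filter_not s (fun i => i % 2 = 0) h]
  set t₁ := (s.filter (fun i => i % 2 = 0)).image (fun i => i / 2) with ht₁
  set t₂ := (s.filter (fun i => ¬ i % 2 = 0)).image (fun i => i / 2) with ht₂
  have e₁ : ∏ k ∈ t₁, f k = ∏ i ∈ s.filter (fun i => i % 2 = 0), h i := by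
    have hinj : ∀ x ∈ s.filter (fun i => i % 2 = 0), ∀ y ∈ s.filter (fun i => i % 2 = 0),
        x / 2 = y / 2 → x = y := by
      intro x hx y hy hxy
      have hx' : x % 2 = 0 := by simpa using (Finset.mem_filter.mp hx).2
      have hy' : y % 2 = 0 := by simpa using (Finset.mem_filter.mp hy).2
      omega
    rw [ht₁, Finset.prod_image hinj]
    refine Finset.prod_congr rfl fun i hi => ?_
    have h2 : i % 2 = 0 := by simpa using (Finset.mem_filter.mp hi).2
    calc f (i/2) = h (2*(i/2)) := (hfh _).symm
      _ = h i := by rw [show 2*(i/2) = i by omega]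
  have e₂ : ∏ k ∈ t₂, g k = ∏ i ∈ s.filter (fun i => ¬ i % 2 = 0), h i := by
    have hinj : ∀ x ∈ s.filter (fun i => ¬ i % 2 = 0), ∀ y ∈ s.filter (fun i => ¬ i % 2 = 0),
        x / 2 = y / 2 → x = y := by
      intro x hx y hy hxy
      have hx' : ¬ x % 2 = 0 := by simpa using (Finset.mem_filter.mp hx).2
      have hy' : ¬ y % 2 = 0 := by simpa using (Finset.mem_filter.mp hy).2
      omega
    rw [ht₂, Finset.prod_image hinj]
    refine Finset.prod_congr rfl fun i hi => ?_
    have h2 : ¬ i % 2 = 0 := by simpa using (Finset.mem_filter.mp hi).2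
    calc g (i/2) = h (2*(i/2)+1) := (hgh _).symm
      _ = h i := by rw [show 2*(i/2)+1 = i by omega]
  have m₁ : s₁ ⊆ t₁ := by
    intro k hk
    have : 2*k ∈ s := hs (Finset.mem_union_left _ (Finset.mem_image_of_mem _ hk))
    rw [ht₁]
    refine Finset.mem_image.2 ⟨2*k, Finset.mem_filter.2 ⟨this, by omega⟩, by omega⟩
  have m₂ : s₂ ⊆ t₂ := by
    intro k hk
    have : 2*k+1 ∈ s := hs (Finset.mem_union_right _ (Finset.mem_image_of_mem _ hk))
    rw [ht₂]
    refine Finset.mem_image.2 ⟨2*k+1, Finset.mem_filter.2 ⟨this, by omega⟩, by omega⟩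
  rw [← e₁, ← e₂]
  exact coeff_mul_window (h₁ t₁ m₁) (h₂ t₂ m₂) j hj

lemma StabProd.shift {f : ℕ → PS} {t : ℕ} {M : PS}
    (h : StabProd (fun k => f (k + t)) M) :
    StabProd f ((∏ k ∈ range t, f k) * M) := by
  intro d
  obtain ⟨s₀, h₀⟩ := h d
  refine ⟨range t ∪ s₀.image (fun k => k + t), fun s hs j hj => ?_⟩
  simp only
  rw [← Finset.prod_filter_mul_prod_filter_not s (fun i => i < t) f]
  have e₀ : s.filter (fun i => i < t) = range t := by
    ext i
    simp only [Finset.mem_filter, Finset.mem_range]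
    constructor
    · exact fun h => h.2
    · intro hi
      exact ⟨hs (Finset.mem_union_left _ (Finset.mem_range.2 hi)), hi⟩
  set u := (s.filter (fun i => ¬ i < t)).image (fun i => i - t) with hu
  have e₁ : ∏ k ∈ u, f (k + t) = ∏ i ∈ s.filter (fun i => ¬ i < t), f i := by
    have hinj : ∀ x ∈ s.filter (fun i => ¬ i < t), ∀ y ∈ s.filter (fun i => ¬ i < t),
        x - t = y - t → x = y := by
      intro x hx y hy hxy
      have hx' : ¬ x < t := by simpa using (Finset.mem_filter.mp hx).2
      have hy' : ¬ y < t := by simpa using (Finset.mem_filter.mp hy).2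
      omega
    rw [hu, Finset.prod_image hinj]
    refine Finset.prod_congr rfl fun i hi => ?_
    have h2 : ¬ i < t := by simpa using (Finset.mem_filter.mp hi).2
    rw [show i - t + t = i by omega]
  have m₁ : s₀ ⊆ u := by
    intro k hk
    have : k + t ∈ s := hs (Finset.mem_union_right _ (Finset.mem_image_of_mem _ hk))
    rw [hu]
    refine Finset.mem_image.2 ⟨k + t, Finset.mem_filter.2 ⟨this, by omega⟩, by omega⟩
  rw [e₀, ← e₁]
  calc coeff j ((∏ k ∈ range t, f k) * ∏ k ∈ u, f (k+t))
      = coeff j ((∏ k ∈ range t, f k) * M) :=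
        coeff_mul_window (fun _ _ => rfl) (h₀ u m₁) j hj
    _ = _ := rfl

lemma StabSum.of_double_int {g : ℤ → PS} {S : PS} (hzero : ∀ i : ℤ, ¬ (2 ∣ i) → g i = 0)
    (h : StabSum (fun k : ℤ => g (2*k)) S) : StabSum g S := by
  intro d
  obtain ⟨s₀, h₀⟩ := h d
  refine ⟨s₀.image (fun k => 2*k), fun s hs j hj => ?_⟩
  simp only
  classical
  rw [← Finset.sum_filter_of_ne (f := g) (p := fun i => 2 ∣ i)
    (fun x _ hx => by by_contra hc; exact hx (hzero x hc))]
  set u := (s.filter (fun i => 2 ∣ i)).image (fun i => i / 2) with hu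
  have e₁ : ∑ k ∈ u, g (2*k) = ∑ i ∈ s.filter (fun i => 2 ∣ i), g i := by
    have hinj : ∀ x ∈ s.filter (fun i => (2:ℤ) ∣ i), ∀ y ∈ s.filter (fun i => (2:ℤ) ∣ i),
        x / 2 = y / 2 → x = y := by
      intro x hx y hy hxy
      have hx' : (2:ℤ) ∣ x := by simpa using (Finset.mem_filter.mp hx).2
      have hy' : (2:ℤ) ∣ y := by simpa using (Finset.mem_filter.mp hy).2
      omega
    rw [hu, Finset.sum_image hinj]
    refine Finset.sum_congr rfl fun i hi => ?_
    have h2 : (2:ℤ) ∣ i := by simpa using (Finset.mem_filter.mp hi).2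
    rw [show 2*(i/2) = i by omega]
  have m₁ : s₀ ⊆ u := by
    intro k hk
    have : 2*k ∈ s := hs (Finset.mem_image_of_mem _ hk)
    rw [hu]
    refine Finset.mem_image.2 ⟨2*k, Finset.mem_filter.2 ⟨this, ⟨k, by ring⟩⟩, by omega⟩
  rw [← e₁]
  exact h₀ u m₁ j hj

lemma StabSum.of_double_nat {g : ℕ → PS} {S : PS} (hzero : ∀ n : ℕ, n % 2 = 1 → g n = 0)
    (h : StabSum (fun k : ℕ => g (2*k)) S) : StabSum g S := by
  intro d
  obtain ⟨s₀, h₀⟩ := h d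
  refine ⟨s₀.image (fun k => 2*k), fun s hs j hj => ?_⟩
  simp only
  classical
  rw [← Finset.sum_filter_of_ne (f := g) (p := fun i => i % 2 = 0)
    (fun x _ hx => by by_contra hc; exact hx (hzero x (by omega)))]
  set u := (s.filter (fun i => i % 2 = 0)).image (fun i => i / 2) with hu
  have e₁ : ∑ k ∈ u, g (2*k) = ∑ i ∈ s.filter (fun i => i % 2 = 0), g i := by
    have hinj : ∀ x ∈ s.filter (fun i => i % 2 = 0), ∀ y ∈ s.filter (fun i => i % 2 = 0),
        x / 2 = y / 2 → x = y := by
      intro x hx y hy hxy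
      have hx' : x % 2 = 0 := by simpa using (Finset.mem_filter.mp hx).2
      have hy' : y % 2 = 0 := by simpa using (Finset.mem_filter.mp hy).2
      omega
    rw [hu, Finset.sum_image hinj]
    refine Finset.sum_congr rfl fun i hi => ?_
    have h2 : i % 2 = 0 := by simpa using (Finset.mem_filter.mp hi).2
    rw [show 2*(i/2) = i by omega]
  have m₁ : s₀ ⊆ u := by
    intro k hk
    have : 2*k ∈ s := hs (Finset.mem_image_of_mem _ hk)
    rw [hu]
    refine Finset.mem_image.2 ⟨2*k, Finset.mem_filter.2 ⟨this, by omega⟩, by omega⟩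
  rw [← e₁]
  exact h₀ u m₁ j hj

/-! concrete product families -/

def pG (ε : ℚ) (a m : ℕ) : ℕ → PS := fun k => 1 + PowerSeries.C ε * X ^ (m*k + a)

def PG (ε : ℚ) (a m : ℕ) : PS := plim (pG ε a m)

lemma pG_nice (ε : ℚ) {a m : ℕ} (ha : 1 ≤ a) (hm : 1 ≤ m) : Nice (pG ε a m) := by
  intro k
  have hk : k ≤ m * k := Nat.le_mul_of_pos_left k hm
  exact oneUpto_of_lt ε (by omega)


lemma PG_stab (ε : ℚ) {a m : ℕ} (ha : 1 ≤ a) (hm : 1 ≤ m) :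
    StabProd (pG ε a m) (PG ε a m) := (pG_nice ε ha hm).stabProd

lemma PG_split (ε : ℚ) {a m : ℕ} (ha : 1 ≤ a) (hm : 1 ≤ m) :
    PG ε a m = PG ε a (2*m) * PG ε (a+m) (2*m) := by
  refine Stab.unique (PG_stab ε ha hm) ?_
  refine StabProd.interleave (f := pG ε a (2*m)) (g := pG ε (a+m) (2*m)) ?_ ?_
    (PG_stab ε ha (by omega)) (PG_stab ε (by omega) (by omega))
  · intro k
    simp only [pG]
    congr 2
    ring
  · intro k
    simp only [pG]
    congr 2
    ring

lemma PG_pair {ε : ℚ} (hε : ε * ε = 1) {a m : ℕ} (ha : 1 ≤ a) (hm : 1 ≤ m) :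
    PG ε a m * PG (-ε) a m = PG (-1) (2*a) (2*m) := by
  have h1 : StabProd (fun k => pG ε a m k * pG (-ε) a m k) (PG ε a m * PG (-ε) a m) :=
    (PG_stab ε ha hm).mul (PG_stab (-ε) ha hm)
  have h2 : StabProd (pG (-1) (2*a) (2*m)) (PG ε a m * PG (-ε) a m) := by
    refine h1.congr fun k => ?_
    show (1 + C ε * X ^ (m*k+a)) * (1 + C (-ε) * X ^ (m*k+a))
        = 1 + C (-1) * X ^ (2*m*k + 2*a)
    have hx : (X : PS) ^ (2*m*k+2*a) = X ^ (m*k+a) * X ^ (m*k+a) := by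
      rw [← pow_add]
      congr 1
      ring
    have hC : PowerSeries.C ε * PowerSeries.C ε = 1 := by
      rw [← map_mul, hε, map_one]
    simp only [map_neg, map_one]
    rw [hx]
    rw [show (1 + C ε * X ^ (m*k+a)) * (1 + -(C ε) * X ^ (m*k+a))
        = 1 - (C ε * C ε) * (X ^ (m*k+a) * X ^ (m*k+a)) by ring, hC, one_mul]
    ring
  exact Stab.unique h2 (PG_stab (-1) (by omega) (by omega))

lemma coeff_zero_PG (ε : ℚ) {a m : ℕ} (ha : 1 ≤ a) : coeff 0 (PG ε a m) = 1 := by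
  rw [PG, plim, coeff_mk, Finset.range_one, Finset.prod_singleton]
  have h0 := oneUpto_of_lt (e := m*0+a) ε (by omega) 0 le_rfl
  rw [show pG ε a m 0 = 1 + PowerSeries.C ε * X ^ (m*0+a) from rfl, h0]
  simp

lemma PG_ne_zero (ε : ℚ) {a m : ℕ} (ha : 1 ≤ a) : PG ε a m ≠ 0 := by
  intro h
  have := coeff_zero_PG ε (m := m) ha
  rw [h] at this
  simp at this

/-! ### Part C: finite Pochhammer products and Gaussian binomials in base `X^c` -/

/-- `(x^c; x^c)_m` -/
def poch (c m : ℕ) : PS := ∏ t ∈ range m, (1 - X ^ (c*(t+1)))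

/-- `∏_{t<m} (1 - x^{c(r+t)})` -/
def ptr (c r m : ℕ) : PS := ∏ t ∈ range m, (1 - X ^ (c*(r+t)))

/-- numerator of the Gaussian binomial `[n choose m]_{x^c}` -/
def pt (c n m : ℕ) : PS := ptr c (n+1-m) m

/-- the Gaussian binomial `[n choose m]_{x^c}` -/
def gb (c n m : ℕ) : PS := pt c n m * (poch c m)⁻¹

lemma constantCoeff_poch {c : ℕ} (hc : 1 ≤ c) (m : ℕ) :
    constantCoeff (poch c m) = 1 := by
  rw [poch, map_prod]
  apply Finset.prod_eq_one
  intro t _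
  rw [map_sub, map_one, map_pow, constantCoeff_X, zero_pow (by positivity), sub_zero]

lemma poch_ne_zero {c : ℕ} (hc : 1 ≤ c) (m : ℕ) : poch c m ≠ 0 := by
  intro h
  have := constantCoeff_poch hc m
  rw [h, map_zero] at this
  exact zero_ne_one this

lemma poch_mul_inv {c : ℕ} (hc : 1 ≤ c) (m : ℕ) : poch c m * (poch c m)⁻¹ = 1 :=
  PowerSeries.mul_inv_cancel _ (by rw [constantCoeff_poch hc]; exact one_ne_zero)

lemma gb_mul_poch {c : ℕ} (hc : 1 ≤ c) (n m : ℕ) : gb c n m * poch c m = pt c n m := by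
  rw [gb, mul_assoc, mul_comm ((poch c m)⁻¹), poch_mul_inv hc, mul_one]

lemma poch_succ (c m : ℕ) : poch c (m+1) = poch c m * (1 - X ^ (c*(m+1))) :=
  Finset.prod_range_succ _ m

lemma poch_split (c : ℕ) {i K : ℕ} (h : i ≤ K) :
    poch c K = poch c i * ∏ t ∈ range (K - i), (1 - X ^ (c*(i+t+1))) := by
  have hK : K = i + (K - i) := by omega
  calc poch c K = ∏ t ∈ range (i + (K - i)), (1 - X ^ (c*(t+1))) := by rw [poch, ← hK]
    _ = _ := by
      rw [Finset.prod_range_add]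
      rfl

lemma ptr_succ (c r m : ℕ) : ptr c r (m+1) = ptr c r m * (1 - X ^ (c*(r+m))) :=
  Finset.prod_range_succ _ m

lemma ptr_succ' (c r m : ℕ) : ptr c r (m+1) = (1 - X ^ (c*r)) * ptr c (r+1) m := by
  rw [ptr, Finset.prod_range_succ']
  have h0 : (1 - X ^ (c*(r+0)) : PS) = 1 - X ^ (c*r) := by norm_num
  have h1 : ∀ t, (1 - X ^ (c*(r+(t+1))) : PS) = 1 - X ^ (c*((r+1)+t)) := by
    intro t
    congr 2
    ring
  rw [h0, mul_comm]
  congr 1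
  rw [ptr]
  exact Finset.prod_congr rfl fun t _ => h1 t

/-- first Pascal-type recurrence at the level of numerators -/
lemma ptr_P1 (c r m : ℕ) :
    ptr c (r+1) (m+1) = ptr c r (m+1) + X ^ (c*r) * ((1 - X ^ (c*(m+1))) * ptr c (r+1) m) := by
  rw [ptr_succ, ptr_succ']
  have : (1 - X ^ (c*r)) * ptr c (r+1) m + X ^ (c*r) * ((1 - X ^ (c*(m+1))) * ptr c (r+1) m)
      = ptr c (r+1) m * (1 - X ^ (c*r) * X ^ (c*(m+1))) := by ring
  rw [this, ← pow_add]
  congr 2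
  ring

/-- second Pascal-type recurrence at the level of numerators -/
lemma ptr_P2 (c r m : ℕ) :
    ptr c (r+1) (m+1)
      = X ^ (c*(m+1)) * ptr c r (m+1) + (1 - X ^ (c*(m+1))) * ptr c (r+1) m := by
  rw [ptr_succ, ptr_succ']
  have : X ^ (c*(m+1)) * ((1 - X ^ (c*r)) * ptr c (r+1) m) + (1 - X ^ (c*(m+1))) * ptr c (r+1) m
      = ptr c (r+1) m * (1 - X ^ (c*r) * X ^ (c*(m+1))) := by ring
  rw [this, ← pow_add]
  congr 2
  ring

lemma pt_zero (c n : ℕ) : pt c n 0 = 1 := rfl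

lemma gb_zero (c n : ℕ) : gb c n 0 = 1 := by
  rw [gb, pt_zero, one_mul, poch]
  simp

lemma pt_top (c n : ℕ) : pt c n (n+1) = 0 := by
  rw [pt, ptr]
  refine Finset.prod_eq_zero (Finset.mem_range.2 (Nat.succ_pos n)) ?_
  rw [show n + 1 - (n+1) + 0 = 0 by omega]
  simp

lemma gb_top (c n : ℕ) : gb c n (n+1) = 0 := by rw [gb, pt_top, zero_mul]

lemma gb_pascal1 {c : ℕ} (hc : 1 ≤ c) {n m : ℕ} (hm : m ≤ n) :
    gb c (n+1) (m+1) = gb c n (m+1) + X ^ (c*(n-m)) * gb c n m := by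
  apply mul_right_cancel₀ (poch_ne_zero hc (m+1))
  rw [add_mul, gb_mul_poch hc, gb_mul_poch hc, poch_succ, mul_assoc,
    show X ^ (c*(n-m)) * (gb c n m * (poch c m * (1 - X ^ (c*(m+1)))))
      = X ^ (c*(n-m)) * ((gb c n m * poch c m) * (1 - X ^ (c*(m+1)))) by ring,
    gb_mul_poch hc]
  rw [pt, pt, pt, show n + 1 + 1 - (m+1) = (n - m) + 1 by omega,
    show n + 1 - (m+1) = n - m by omega, show n + 1 - m = (n-m) + 1 by omega]
  rw [ptr_P1]
  ring

lemma gb_pascal2 {c : ℕ} (hc : 1 ≤ c) {n m : ℕ} (hm : m ≤ n) :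
    gb c (n+1) (m+1) = X ^ (c*(m+1)) * gb c n (m+1) + gb c n m := by
  apply mul_right_cancel₀ (poch_ne_zero hc (m+1))
  rw [add_mul, mul_assoc, gb_mul_poch hc, gb_mul_poch hc, poch_succ,
    show gb c n m * (poch c m * (1 - X ^ (c*(m+1))))
      = (gb c n m * poch c m) * (1 - X ^ (c*(m+1))) by ring,
    gb_mul_poch hc]
  rw [pt, pt, pt, show n + 1 + 1 - (m+1) = (n - m) + 1 by omega,
    show n + 1 - (m+1) = n - m by omega, show n + 1 - m = (n-m) + 1 by omega]
  rw [ptr_P2]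
  ring

lemma oneUpto_one_sub_pow {d e : ℕ} (hde : d < e) : oneUpto d (1 - X ^ e) := by
  rw [show (1 - X ^ e : PS) = 1 + PowerSeries.C (-1) * X ^ e by
    rw [map_neg, map_one]; ring]
  exact oneUpto_of_lt _ hde

lemma oneUpto_ptr {d c r m : ℕ} (h : d < c * r) : oneUpto d (ptr c r m) := by
  rw [ptr]
  apply oneUpto_prod
  intro t _
  refine oneUpto_one_sub_pow (lt_of_lt_of_le h ?_)
  exact Nat.mul_le_mul_left c (by omega)

/-! ### Part D: finite q-binomial theorem and finite Jacobi triple product -/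

def tri : ℕ → ℕ
  | 0 => 0
  | m+1 => tri m + m

lemma tri_zero : tri 0 = 0 := rfl

lemma tri_succ (m : ℕ) : tri (m+1) = tri m + m := rfl

lemma two_tri (m : ℕ) : 2 * tri m = m * (m - 1) := by
  induction m with
  | zero => rfl
  | succ p ih =>
    rw [tri_succ, Nat.mul_add, ih]
    cases p with
    | zero => rfl
    | succ q =>
      simp only [Nat.add_sub_cancel]
      ring

lemma qbin_fin {c : ℕ} (hc : 1 ≤ c) (z : PS) (N : ℕ) :
    ∏ k ∈ range N, (1 + z * X ^ (c*k))
      = ∑ m ∈ range (N+1), z ^ m * X ^ (c * tri m) * gb c N m := by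
  induction N with
  | zero => simp [tri_zero, gb_zero]
  | succ N ih =>
    set f : ℕ → PS := fun m => z ^ m * X ^ (c * tri m) * gb c N m with hf
    set F : ℕ → PS := fun m => z ^ m * X ^ (c * tri m) * gb c (N+1) m with hF
    have hT0 : F 0 = 1 := by simp [hF, tri_zero, gb_zero]
    have hf0 : f 0 = 1 := by simp [hf, tri_zero, gb_zero]
    have hftop : f (N+1) = 0 := by
      rw [hf]
      simp only [gb_top]
      ring
    have hsplit : ∀ m ∈ range (N+1),
        F (m+1) = f (m+1) + (z * X ^ (c*N)) * f m := by
      intro m hm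
      have hmN : m ≤ N := Nat.lt_succ_iff.mp (Finset.mem_range.mp hm)
      rw [hF, hf]
      simp only
      rw [gb_pascal1 hc hmN, mul_add]
      congr 1
      have he : c * tri (m+1) + c*(N - m) = c * tri m + c * N := by
        rw [tri_succ, ← Nat.mul_add, ← Nat.mul_add]
        congr 1
        omega
      rw [show z^(m+1) * X ^ (c * tri (m+1)) * (X ^ (c*(N-m)) * gb c N m)
          = z^(m+1) * (X ^ (c * tri (m+1)) * X ^ (c*(N-m))) * gb c N m by ring,
        ← pow_add, he, pow_add, pow_succ]
      ring
    rw [Finset.prod_range_succ, ih]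
    rw [Finset.sum_range_succ' F (N+1), hT0]
    rw [Finset.sum_congr rfl hsplit, Finset.sum_add_distrib]
    have e1 : ∑ m ∈ range (N+1), f (m+1) = (∑ m ∈ range (N+1), f m) - 1 := by
      have h2 := Finset.sum_range_succ' f (N+1)
      have h3 := Finset.sum_range_succ f (N+1)
      rw [hftop, add_zero] at h3
      rw [← h3, h2, hf0]
      ring
    have e2 : ∑ m ∈ range (N+1), (z * X ^ (c*N)) * f m
        = (z * X ^ (c*N)) * ∑ m ∈ range (N+1), f m := by
      rw [Finset.mul_sum]
    rw [e1, e2]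
    ring

def nsq (i N : ℕ) : ℕ := i*i + N*N - 2*(i*N)

lemma nsq_le (i N : ℕ) : 2*(i*N) ≤ i*i + N*N := by
  nlinarith [sq_nonneg ((i:ℤ) - N)]

lemma nsq_cast (i N : ℕ) : (nsq i N : ℤ) = ((i:ℤ) - N)^2 := by
  rw [nsq]
  push_cast [nsq_le i N]
  ring

lemma nsq_E1 (b i N : ℕ) : b * nsq i N + b*(2*N+1) = b * nsq i (N+1) + 2*b*i := by
  have : ((b * nsq i N + b*(2*N+1) : ℕ) : ℤ) = ((b * nsq i (N+1) + 2*b*i : ℕ) : ℤ) := by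
    push_cast [nsq_cast]
    ring
  exact_mod_cast this

lemma nsq_E2 (i N : ℕ) : nsq (i+1) (N+1) = nsq i N := by
  have : ((nsq (i+1) (N+1) : ℕ) : ℤ) = ((nsq i N : ℕ) : ℤ) := by
    push_cast [nsq_cast]
    ring
  exact_mod_cast this

lemma nsq_zero_right (i : ℕ) : nsq i 0 = i * i := by
  have : ((nsq i 0 : ℕ) : ℤ) = ((i*i : ℕ) : ℤ) := by
    push_cast [nsq_cast]
    ring
  exact_mod_cast this

lemma jtp_fin {b : ℕ} (hb : 1 ≤ b) (w : PS) (M N : ℕ) :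
    (∏ k ∈ range M, (1 + w * X ^ (b*(2*k+1)))) * (∏ k ∈ range N, (w + X ^ (b*(2*k+1))))
      = ∑ i ∈ range (M+N+1), w^i * X ^ (b * nsq i N) * gb (2*b) (M+N) i := by
  induction N with
  | zero =>
    rw [Finset.range_zero, Finset.prod_empty, mul_one, Nat.add_zero]
    have h := qbin_fin (c := 2*b) (by omega) (w * X ^ b) M
    have hL : ∀ k, (1 + (w * X ^ b) * X ^ (2*b*k) : PS) = 1 + w * X ^ (b*(2*k+1)) := by
      intro k
      rw [mul_assoc, ← pow_add]
      congr 3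
      ring
    have hR : ∀ m, ((w * X ^ b) ^ m * X ^ (2*b * tri m) * gb (2*b) M m : PS)
        = w^m * X ^ (b * nsq m 0) * gb (2*b) M m := by
      intro m
      rw [mul_pow, nsq_zero_right]
      rw [show w ^ m * (X ^ b) ^ m * X ^ (2*b*tri m) = w ^ m * ((X ^ b) ^ m * X ^ (2*b*tri m)) by
        ring, ← pow_mul, ← pow_add]
      have : b * m + 2*b*tri m = b * (m*m) := by
        have h2 : 2 * tri m = m * (m-1) := two_tri m
        have : b*m + 2*b*tri m = b*m + b*(2*tri m) := by ring
        rw [this, h2]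
        cases m with
        | zero => rfl
        | succ p =>
          simp only [Nat.add_sub_cancel]
          ring
      rw [this]
    rw [Finset.prod_congr rfl (fun k _ => hL k)] at h
    rw [h]
    exact Finset.sum_congr rfl (fun m _ => hR m)
  | succ N ih =>
    rw [Finset.prod_range_succ, ← mul_assoc, ih]
    set f : ℕ → PS := fun i => w^i * X ^ (b * nsq i N) * gb (2*b) (M+N) i with hf
    set F : ℕ → PS := fun i => w^i * X ^ (b * nsq i (N+1)) * gb (2*b) (M+N+1) i with hF
    have hF0 : F 0 = X ^ (b * nsq 0 (N+1)) := by simp [hF, gb_zero]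
    have hf0 : f 0 = X ^ (b * nsq 0 N) := by simp [hf, gb_zero]
    have hftop : f (M+N+1) = 0 := by
      rw [hf]
      simp only [gb_top]
      ring
    have hsplit : ∀ i ∈ range (M+N+1),
        F (i+1) = X ^ (b*(2*N+1)) * f (i+1) + w * f i := by
      intro i hi
      have hiMN : i ≤ M+N := Nat.lt_succ_iff.mp (Finset.mem_range.mp hi)
      rw [hF, hf]
      simp only
      rw [gb_pascal2 (by omega : 1 ≤ 2*b) hiMN, mul_add]
      congr 1
      · -- w^{i+1} X^{b nsq (i+1) (N+1)} * (X^{2b(i+1)} gb (M+N) (i+1))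
        rw [show w^(i+1) * X ^ (b * nsq (i+1) (N+1)) * (X ^ (2*b*(i+1)) * gb (2*b) (M+N) (i+1))
            = w^(i+1) * (X ^ (b * nsq (i+1) (N+1)) * X ^ (2*b*(i+1))) * gb (2*b) (M+N) (i+1) by
          ring, ← pow_add]
        have he : b * nsq (i+1) (N+1) + 2*b*(i+1) = b*(2*N+1) + b * nsq (i+1) N := by
          have := nsq_E1 b (i+1) N
          omega
        rw [he, pow_add]
        ring
      · rw [nsq_E2 i N, pow_succ]
        ring
    rw [show M + (N+1) = M + N + 1 by omega]
    rw [Finset.sum_range_succ' F (M+N+1), hF0]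
    rw [Finset.sum_congr rfl hsplit, Finset.sum_add_distrib]
    have e1 : ∑ i ∈ range (M+N+1), X ^ (b*(2*N+1)) * f (i+1)
        = X ^ (b*(2*N+1)) * ((∑ i ∈ range (M+N+1), f i) - X ^ (b * nsq 0 N)) := by
      rw [← Finset.mul_sum]
      congr 1
      have h2 := Finset.sum_range_succ' f (M+N+1)
      have h3 := Finset.sum_range_succ f (M+N+1)
      rw [hftop, add_zero] at h3
      rw [← h3, h2, hf0]
      ring
    have e2 : ∑ i ∈ range (M+N+1), w * f i = w * ∑ i ∈ range (M+N+1), f i := by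
      rw [Finset.mul_sum]
    rw [e1, e2]
    have hX : (X : PS) ^ (b * nsq 0 (N+1)) = X ^ (b*(2*N+1)) * X ^ (b * nsq 0 N) := by
      rw [← pow_add]
      congr 1
      have h1 : nsq 0 (N+1) = (N+1)*(N+1) := by
        have : ((nsq 0 (N+1) : ℕ) : ℤ) = (((N+1)*(N+1) : ℕ) : ℤ) := by
          push_cast [nsq_cast]
          ring
        exact_mod_cast this
      have h2 : nsq 0 N = N*N := by
        have : ((nsq 0 N : ℕ) : ℤ) = ((N*N : ℕ) : ℤ) := by
          push_cast [nsq_cast]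
          ring
        exact_mod_cast this
      rw [h1, h2]
      ring
    rw [hX]
    ring

/-! ### Part E1: Euler's identity in the limit -/

lemma cf_Xpow_mul' (e j : ℕ) (h : PS) :
    coeff j (X ^ e * h) = if e ≤ j then coeff (j - e) h else 0 := by
  by_cases hej : e ≤ j
  · rw [if_pos hej, show j = (j - e) + e by omega, PowerSeries.coeff_X_pow_mul,
      show j - e + e - e = j - e by omega]
  · rw [if_neg hej, PowerSeries.coeff_mul]
    apply Finset.sum_eq_zero
    intro p hp
    rw [Finset.HasAntidiagonal.mem_antidiagonal] at hp
    rw [PowerSeries.coeff_X_pow, if_neg (by omega), zero_mul]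

lemma coeff_Cpow_mul (ε : ℚ) (m j : ℕ) (h : PS) :
    coeff j ((PowerSeries.C ε) ^ m * h) = ε ^ m * coeff j h := by
  rw [← map_pow, PowerSeries.coeff_C_mul]

lemma oneUpto_coeff {d : ℕ} {A : PS} (h : oneUpto d A) {j : ℕ} (hj : j ≤ d) :
    coeff j A = if j = 0 then 1 else 0 := by
  rw [h j hj, PowerSeries.coeff_one]

lemma sq_split (m : ℕ) : m + 2 * tri m = m * m := by
  have h2 : 2 * tri m = m * (m-1) := two_tri m
  rw [h2]
  cases m with
  | zero => rfl
  | succ p =>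
    simp only [Nat.add_sub_cancel]
    ring

lemma two_le_sq_add_one (m : ℕ) : 2*m ≤ m*m + 1 := by
  cases m with
  | zero => omega
  | succ p =>
    have : (p+1)*(p+1) = p*p + 2*p + 1 := by ring
    omega

/-- the summands of Euler's series `∑ ε^m q^{m²} / (q²;q²)_m` -/
def eS (ε : ℚ) : ℕ → PS := fun m => (PowerSeries.C ε) ^ m * (X ^ (m*m) * (poch 2 m)⁻¹)

def ES (ε : ℚ) : PS := slim (eS ε)

lemma eS_niceS (ε : ℚ) : NiceS (eS ε) := by
  intro m j hj
  rw [eS, coeff_Cpow_mul, cf_Xpow_mul', if_neg ?_, mul_zero]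
  have : m ≤ m*m := Nat.le_mul_of_pos_left m (by omega)
  omega

lemma ES_stab (ε : ℚ) : StabSum (eS ε) (ES ε) := (eS_niceS ε).stabSum

lemma gb_window_poch_inv {c N m d : ℕ} (hc : 1 ≤ c) (h : d < c * (N + 1 - m)) :
    ∀ j ≤ d, coeff j (gb c N m) = coeff j ((poch c m)⁻¹) := by
  intro j hj
  rw [gb, pt]
  calc coeff j (ptr c (N+1-m) m * (poch c m)⁻¹)
      = coeff j ((1:PS) * (poch c m)⁻¹) :=
        coeff_mul_window (oneUpto_ptr h) (fun _ _ => rfl) j hj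
    _ = _ := by rw [one_mul]

lemma coeff_PG (ε : ℚ) {a m : ℕ} (ha : 1 ≤ a) (hm : 1 ≤ m) {d N : ℕ} (hN : d + 1 ≤ N) :
    coeff d (PG ε a m) = coeff d (∏ k ∈ range N, pG ε a m k) := by
  rw [PG, plim, coeff_mk,
    coeff_prod_stable (pG_nice ε ha hm) (Finset.range_subset_range.2 hN)]

lemma coeff_slim {f : ℕ → PS} (hf : NiceS f) {d N : ℕ} (hN : d + 1 ≤ N) :
    coeff d (slim f) = coeff d (∑ n ∈ range N, f n) := by
  rw [slim, coeff_mk, coeff_sum_stable hf (Finset.range_subset_range.2 hN)]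

/-- Euler's identity: `∑_m ε^m x^{m²}/(x²;x²)_m = ∏_k (1 + ε x^{2k+1})`. -/
lemma ES_eq (ε : ℚ) : ES ε = PG ε 1 2 := by
  ext d
  have hq := qbin_fin (c := 2) (by omega) (PowerSeries.C ε * X) (d+1)
  have hL : ∀ k ∈ range (d+1), (1 + (PowerSeries.C ε * X) * X ^ (2*k) : PS) = pG ε 1 2 k := by
    intro k _
    rw [pG, mul_assoc, show (X : PS) * X ^ (2*k) = X ^ (2*k+1) by rw [mul_comm, ← pow_succ]]
  rw [Finset.prod_congr rfl hL] at hq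
  have htop : coeff d ((PowerSeries.C ε * X) ^ (d+1) * X ^ (2 * tri (d+1)) * gb 2 (d+1) (d+1)) = 0 := by
    rw [mul_pow, show (PowerSeries.C ε)^(d+1) * X^(d+1) * X^(2*tri (d+1)) * gb 2 (d+1) (d+1)
      = (PowerSeries.C ε)^(d+1) * (X^((d+1) + 2*tri (d+1)) * gb 2 (d+1) (d+1)) by rw [pow_add]; ring,
      coeff_Cpow_mul, sq_split, cf_Xpow_mul', if_neg ?_, mul_zero]
    have : d+1 ≤ (d+1)*(d+1) := Nat.le_mul_of_pos_left (d+1) (by omega)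
    omega
  have hterm : ∀ m ∈ range (d+1),
      coeff d ((PowerSeries.C ε * X) ^ m * X ^ (2 * tri m) * gb 2 (d+1) m)
        = coeff d (eS ε m) := by
    intro m hm
    have hmd : m ≤ d := by
      have := Finset.mem_range.mp hm
      omega
    rw [eS, mul_pow, show (PowerSeries.C ε)^m * X^m * X^(2*tri m) * gb 2 (d+1) m
        = (PowerSeries.C ε)^m * (X^(m + 2*tri m) * gb 2 (d+1) m) by rw [pow_add]; ring,
      sq_split, coeff_Cpow_mul, coeff_Cpow_mul]
    congr 1
    rw [cf_Xpow_mul', cf_Xpow_mul']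
    by_cases hsq : m*m ≤ d
    · rw [if_pos hsq, if_pos hsq]
      have h1 := two_le_sq_add_one m
      exact gb_window_poch_inv (d := d - m*m) (by omega) (by omega) (d - m*m) le_rfl
    · rw [if_neg hsq, if_neg hsq]
  have hq2 : coeff d (∏ k ∈ range (d+1), pG ε 1 2 k)
      = ∑ m ∈ range (d+1), coeff d (eS ε m) := by
    rw [hq, map_sum, Finset.sum_range_succ, htop, add_zero]
    exact Finset.sum_congr rfl hterm
  rw [ES, coeff_slim (eS_niceS ε) (le_refl (d+1)),
    coeff_PG ε (le_refl 1) (by omega) (le_refl (d+1)), hq2, map_sum]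

/-! ### Part E2: Jacobi triple product in the limit -/

def thE (b a : ℕ) (i : ℤ) : ℕ := ((b:ℤ) * i * i + (a:ℤ) * i).toNat

lemma thE_nonneg {b a : ℕ} (hab : a < b) (i : ℤ) : 0 ≤ (b:ℤ) * i * i + (a:ℤ) * i := by
  rcases le_or_gt 0 i with h | h
  · positivity
  · have h1 : (1:ℤ) ≤ -i := by omega
    have h2 : ((a:ℤ)+1) ≤ (b:ℤ) := by exact_mod_cast hab
    have h4 : (a:ℤ) ≤ (b:ℤ) * (-i) := by nlinarith
    have h5 := mul_le_mul_of_nonneg_right h4 (show (0:ℤ) ≤ -i by omega)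
    nlinarith [h5]

lemma thE_cast {b a : ℕ} (hab : a < b) (i : ℤ) :
    ((thE b a i : ℕ) : ℤ) = (b:ℤ) * i * i + (a:ℤ) * i :=
  Int.toNat_of_nonneg (thE_nonneg hab i)

lemma abs_le_thE {b a : ℕ} (hab : a < b) (i : ℤ) : |i| ≤ (b:ℤ) * i * i + (a:ℤ) * i := by
  have hb1 : (1:ℤ) ≤ (b:ℤ) := by exact_mod_cast (by omega : 1 ≤ b)
  rcases le_or_gt 0 i with h | h
  · rw [abs_of_nonneg h]
    have h5 : (0:ℤ) ≤ i * (i - 1) := by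
      rcases (by omega : i = 0 ∨ 1 ≤ i) with h' | h'
      · simp [h']
      · exact mul_nonneg h (by omega)
    nlinarith [h5, mul_nonneg (sub_nonneg.mpr hb1) (mul_self_nonneg i),
      mul_nonneg (show (0:ℤ) ≤ (a:ℤ) by positivity) h]
  · rw [abs_of_neg h]
    have h1 : (1:ℤ) ≤ -i := by omega
    have h2 : ((a:ℤ)+1) ≤ (b:ℤ) := by exact_mod_cast hab
    have h4 : (a:ℤ) + 1 ≤ (b:ℤ) * (-i) := by nlinarith
    have h5 := mul_le_mul_of_nonneg_right h4 (show (0:ℤ) ≤ -i by omega)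
    nlinarith [h5]

def thF (b a : ℕ) (ε : ℚ) : ℤ → PS :=
  fun i => (PowerSeries.C ε) ^ (i.natAbs) * X ^ (thE b a i)

def TH (b a : ℕ) (ε : ℚ) : PS := slimZ (thF b a ε)

lemma thF_niceZ {b a : ℕ} (hab : a < b) (ε : ℚ) : NiceZ (thF b a ε) := by
  intro i j hj
  rw [thF, coeff_Cpow_mul, PowerSeries.coeff_X_pow, if_neg ?_, mul_zero]
  intro hc
  have h1 := abs_le_thE hab i
  have h2 := thE_cast hab i
  omega

lemma TH_stab {b a : ℕ} (hab : a < b) (ε : ℚ) : StabSum (thF b a ε) (TH b a ε) :=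
  (thF_niceZ hab ε).stabSum

lemma eps_pow_mod {ε : ℚ} (hε : ε * ε = 1) (p : ℕ) : ε ^ p = ε ^ (p % 2) := by
  conv_lhs => rw [← Nat.div_add_mod p 2]
  rw [pow_add, pow_mul, show ε^2 = 1 by rw [sq]; exact hε, one_pow, one_mul]

lemma eps_ne_zero {ε : ℚ} (hε : ε * ε = 1) : ε ≠ 0 := by
  intro h
  rw [h] at hε
  norm_num at hε

lemma poch_eq_prod_pG (c K : ℕ) : poch c K = ∏ t ∈ range K, pG (-1) c c t := by
  rw [poch]
  refine Finset.prod_congr rfl fun t _ => ?_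
  rw [pG, map_neg, map_one, show c*t + c = c*(t+1) by ring]
  ring

/-- numeric bound: `aN ≤ ai + b·(i-N)²`. -/
lemma theta_exp_lb {b a : ℕ} (ha : 1 ≤ a) (hab : a < b) (i N : ℕ) :
    a*N ≤ a*i + b * nsq i N := by
  have hcast := nsq_cast i N
  have h2 : ((a:ℤ)+1) ≤ (b:ℤ) := by exact_mod_cast hab
  have : ((a*N : ℕ) : ℤ) ≤ ((a*i + b*nsq i N : ℕ) : ℤ) := by
    push_cast [hcast]
    rcases le_or_gt (N:ℤ) i with h | h
    · nlinarith [sq_nonneg ((i:ℤ) - N)]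
    · nlinarith [sq_nonneg ((i:ℤ) - N), sq_nonneg ((i:ℤ) - N + 1)]
  exact_mod_cast this

/-- if the exponent is within the window, then `i` is close to `N`. -/
lemma theta_exp_window {b a : ℕ} (ha : 1 ≤ a) (hab : a < b) {i N d : ℕ}
    (h : a*i + b * nsq i N ≤ d + a*N) : N ≤ i + d ∧ i ≤ N + d := by
  have hcast := nsq_cast i N
  have h2 : ((a:ℤ)+1) ≤ (b:ℤ) := by exact_mod_cast hab
  have hz : (a:ℤ)*i + b*((i:ℤ)-N)^2 ≤ d + a*N := by
    have : ((a*i + b*nsq i N : ℕ) : ℤ) ≤ ((d + a*N : ℕ) : ℤ) := by exact_mod_cast h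
    push_cast [hcast] at this
    linarith
  have ha' : (1:ℤ) ≤ (a:ℤ) := by exact_mod_cast ha
  constructor
  · by_contra hc
    push_neg at hc
    have h3 : (d:ℤ) + 1 ≤ (N:ℤ) - i := by
      have : i + d < N := hc
      omega
    have hu : (1:ℤ) ≤ (N:ℤ) - i := by linarith
    have h7 : (1:ℤ) ≤ (b:ℤ)*((N:ℤ)-i) - a := by
      have := mul_le_mul_of_nonneg_right h2 (show (0:ℤ) ≤ (N:ℤ)-i by linarith)
      nlinarith
    have h8 : ((N:ℤ)-i) * ((b:ℤ)*((N:ℤ)-i) - a) ≤ d := by nlinarith [hz]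
    have h9 : ((N:ℤ)-i) * 1 ≤ ((N:ℤ)-i) * ((b:ℤ)*((N:ℤ)-i) - a) :=
      mul_le_mul_of_nonneg_left h7 (by linarith)
    linarith
  · by_contra hc
    push_neg at hc
    have h3 : (d:ℤ) + 1 ≤ (i:ℤ) - N := by omega
    have h9 : ((i:ℤ)-N) ≤ (a:ℤ)*((i:ℤ)-N) := by nlinarith
    nlinarith [sq_nonneg ((i:ℤ)-N)]

lemma pt_def (c n m : ℕ) : pt c n m = ptr c (n+1-m) m := rfl

lemma theta_cond {b a : ℕ} (ha : 1 ≤ a) (hab : a < b) {N d : ℕ} (hdN : d ≤ N) (t : ℤ)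
    (ht1 : -(d:ℤ) ≤ t) (ht2 : t ≤ d) :
    (a*((N:ℤ) + t).toNat + b*nsq (((N:ℤ) + t).toNat) N = d + a*N) ↔ (d = thE b a t) := by
  have hNt : ((((N:ℤ) + t).toNat : ℕ) : ℤ) = (N:ℤ) + t := by omega
  have h1 : ((nsq (((N:ℤ) + t).toNat) N : ℕ) : ℤ) = t * t := by
    rw [nsq_cast, hNt]
    ring
  have h2 := thE_cast hab t
  have hexp1 : (a:ℤ)*((N:ℤ)+t) = (a:ℤ)*N + (a:ℤ)*t := by ring
  have hexp2 : (b:ℤ)*(t*t) = (b:ℤ)*t*t := by ring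
  constructor
  · intro hc
    have hc' := congrArg (fun u : ℕ => (u : ℤ)) hc
    push_cast [h1, hNt] at hc'
    omega
  · intro hc
    have : ((a*((N:ℤ) + t).toNat + b*nsq (((N:ℤ) + t).toNat) N : ℕ) : ℤ)
        = ((d + a*N : ℕ) : ℤ) := by
      push_cast [h1, hNt]
      omega
    exact_mod_cast this

lemma jtp_limit {b a : ℕ} (ha : 1 ≤ a) (hab : a < b) {ε : ℚ} (hε : ε * ε = 1) :
    PG (-1) (2*b) (2*b) * (PG ε (b+a) (2*b) * PG ε (b-a) (2*b)) = TH b a ε := by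
  have hb : 1 ≤ b := by omega
  have hba : 1 ≤ b - a := by omega
  have hCC : PowerSeries.C ε * PowerSeries.C ε = 1 := by
    rw [← map_mul, hε, map_one]
  ext d
  obtain ⟨N, hNdef⟩ : ∃ N, N = 2*d + 1 := ⟨2*d+1, rfl⟩
  -- the finite JTP specialized at w = ε x^a
  have hjtp := jtp_fin hb (PowerSeries.C ε * X ^ a) N N
  have hV : ∀ k ∈ range N, (1 + (PowerSeries.C ε * X ^ a) * X ^ (b*(2*k+1)) : PS)
      = pG ε (b+a) (2*b) k := by
    intro k _
    rw [pG, mul_assoc, ← pow_add, show a + b*(2*k+1) = 2*b*k + (b+a) by ring]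
  have hW : ∀ k ∈ range N, ((PowerSeries.C ε * X ^ a) + X ^ (b*(2*k+1)) : PS)
      = (PowerSeries.C ε * X ^ a) * pG ε (b-a) (2*b) k := by
    intro k _
    rw [pG,
      show (PowerSeries.C ε * X ^ a) * (1 + PowerSeries.C ε * X ^ (2*b*k + (b-a)))
        = PowerSeries.C ε * X ^ a
          + (PowerSeries.C ε * PowerSeries.C ε) * (X ^ a * X ^ (2*b*k + (b-a))) by ring,
      hCC, one_mul, ← pow_add,
      show a + (2*b*k + (b-a)) = b*(2*k+1) by
        have hb2 : b*(2*k+1) = 2*b*k + b := by ring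
        omega]
  rw [Finset.prod_congr rfl hV, Finset.prod_congr rfl hW, Finset.prod_mul_distrib,
    Finset.prod_const, Finset.card_range] at hjtp
  have hjtp2 := congrArg (fun u => coeff (d + a*N) (u * poch (2*b) (N+N))) hjtp
  -- decompose gb * poch
  have hGi : ∀ i, i ≤ N+N → gb (2*b) (N+N) i * poch (2*b) (N+N)
      = pt (2*b) (N+N) i * ∏ t ∈ range (N+N - i), (1 - X ^ (2*b*(i+t+1))) := by
    intro i hi
    rw [poch_split (2*b) hi, gb]
    calc pt (2*b) (N+N) i * (poch (2*b) i)⁻¹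
          * (poch (2*b) i * ∏ t ∈ range (N+N-i), (1 - X ^ (2*b*(i+t+1))))
        = pt (2*b) (N+N) i * (∏ t ∈ range (N+N-i), (1 - X ^ (2*b*(i+t+1))))
          * ((poch (2*b) i)⁻¹ * poch (2*b) i) := by ring
      _ = _ := by
        rw [mul_comm ((poch (2*b) i)⁻¹), poch_mul_inv (by omega), mul_one]
  -- key coefficient computation for each summand
  have key : ∀ i ∈ range (N+N+1),
      coeff (d + a*N) ((PowerSeries.C ε * X^a)^i * X^(b * nsq i N)
        * (gb (2*b) (N+N) i * poch (2*b) (N+N)))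
        = ε^i * (if a*i + b*nsq i N = d + a*N then 1 else 0) := by
    intro i hi
    have hi' : i ≤ N+N := by
      have := Finset.mem_range.mp hi
      omega
    rw [hGi i hi', mul_pow, ← pow_mul,
      show (PowerSeries.C ε)^i * X^(a*i) * X^(b*nsq i N)
          * (pt (2*b) (N+N) i * ∏ t ∈ range (N+N-i), (1 - X ^ (2*b*(i+t+1))))
        = (PowerSeries.C ε)^i * (X^(a*i + b*nsq i N)
          * (pt (2*b) (N+N) i * ∏ t ∈ range (N+N-i), (1 - X ^ (2*b*(i+t+1))))) by
        rw [pow_add]; ring,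
      coeff_Cpow_mul, cf_Xpow_mul']
    by_cases he : a*i + b*nsq i N ≤ d + a*N
    · rw [if_pos he]
      have hlb := theta_exp_lb ha hab i N
      obtain ⟨hwin1, hwin2⟩ := theta_exp_window ha hab he
      have hone : oneUpto d (pt (2*b) (N+N) i
          * ∏ t ∈ range (N+N-i), (1 - X ^ (2*b*(i+t+1)))) := by
        rw [pt_def]
        refine (oneUpto_ptr ?_).mul (oneUpto_prod _ _ ?_)
        · have h1 : d + 2 ≤ N+N+1-i := by omega
          have h2 : 2*(d+2) ≤ 2*b*(N+N+1-i) := Nat.mul_le_mul (by omega) h1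
          omega
        · intro t _
          refine oneUpto_one_sub_pow ?_
          have h1 : d + 2 ≤ i+t+1 := by omega
          have h2 : 2*(d+2) ≤ 2*b*(i+t+1) := Nat.mul_le_mul (by omega) h1
          omega
      rw [oneUpto_coeff hone (by omega)]
      by_cases h0 : a*i + b*nsq i N = d + a*N
      · rw [if_pos h0, if_pos (by omega)]
      · rw [if_neg h0, if_neg (by omega)]
    · rw [if_neg he, if_neg (by omega), mul_zero]
  -- right-hand side of hjtp2 as an explicit sum
  have hRHS : coeff (d + a*N)
      ((∑ i ∈ range (N+N+1), (PowerSeries.C ε * X^a)^i * X^(b * nsq i N)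
        * gb (2*b) (N+N) i) * poch (2*b) (N+N))
      = ∑ i ∈ range (N+N+1), ε^i * (if a*i + b*nsq i N = d + a*N then 1 else 0) := by
    rw [Finset.sum_mul, map_sum]
    refine Finset.sum_congr rfl fun i hi => ?_
    rw [show (PowerSeries.C ε * X^a)^i * X^(b * nsq i N) * gb (2*b) (N+N) i
          * poch (2*b) (N+N)
        = (PowerSeries.C ε * X^a)^i * X^(b * nsq i N)
          * (gb (2*b) (N+N) i * poch (2*b) (N+N)) by ring]
    exact key i hi
  -- left-hand side of hjtp2 in terms of the limit products
  have hLHS : coeff (d + a*N)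
      (((∏ k ∈ range N, pG ε (b+a) (2*b) k)
        * ((PowerSeries.C ε * X^a)^N * ∏ k ∈ range N, pG ε (b-a) (2*b) k))
        * poch (2*b) (N+N))
      = ε^N * coeff d (PG (-1) (2*b) (2*b) * (PG ε (b+a) (2*b) * PG ε (b-a) (2*b))) := by
    rw [show ((∏ k ∈ range N, pG ε (b+a) (2*b) k)
          * ((PowerSeries.C ε * X^a)^N * ∏ k ∈ range N, pG ε (b-a) (2*b) k))
          * poch (2*b) (N+N)
        = (PowerSeries.C ε)^N * (X^(a*N) * (poch (2*b) (N+N)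
          * ((∏ k ∈ range N, pG ε (b+a) (2*b) k) * ∏ k ∈ range N, pG ε (b-a) (2*b) k))) by
        rw [mul_pow, ← pow_mul]; ring,
      coeff_Cpow_mul, cf_Xpow_mul', if_pos (by omega), show d + a*N - a*N = d by omega]
    congr 1
    have hw0 : ∀ j ≤ d, coeff j (poch (2*b) (N+N)) = coeff j (PG (-1) (2*b) (2*b)) := by
      intro j hj
      rw [poch_eq_prod_pG, ← coeff_PG (-1) (by omega) (by omega) (by omega)]
    have hw1 : ∀ j ≤ d, coeff j (∏ k ∈ range N, pG ε (b+a) (2*b) k)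
        = coeff j (PG ε (b+a) (2*b)) := by
      intro j hj
      rw [← coeff_PG ε (by omega) (by omega) (by omega)]
    have hw2 : ∀ j ≤ d, coeff j (∏ k ∈ range N, pG ε (b-a) (2*b) k)
        = coeff j (PG ε (b-a) (2*b)) := by
      intro j hj
      rw [← coeff_PG ε (by omega) (by omega) (by omega)]
    exact coeff_mul_window hw0 (coeff_mul_window hw1 hw2) d le_rfl
  -- the theta-series side
  have hTH : coeff d (TH b a ε)
      = ∑ t ∈ Finset.Icc (-(d:ℤ)) d, ε^(t.natAbs) * (if d = thE b a t then 1 else 0) := by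
    rw [TH, slimZ, coeff_mk, map_sum]
    refine Finset.sum_congr rfl fun t _ => ?_
    rw [thF, coeff_Cpow_mul, PowerSeries.coeff_X_pow]
  -- matching the two finite sums
  have hmatch : ∑ i ∈ range (N+N+1), ε^i * (if a*i + b*nsq i N = d + a*N then 1 else 0)
      = ε^N * ∑ t ∈ Finset.Icc (-(d:ℤ)) d, ε^(t.natAbs) * (if d = thE b a t then 1 else 0) := by
    have himg : (Finset.Icc (-(d:ℤ)) d).image (fun t : ℤ => ((N:ℤ) + t).toNat)
        ⊆ range (N+N+1) := by
      intro x hx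
      obtain ⟨t, ht, rfl⟩ := Finset.mem_image.mp hx
      rw [Finset.mem_Icc] at ht
      rw [Finset.mem_range]
      omega
    have hvan : ∀ x ∈ range (N+N+1),
        x ∉ (Finset.Icc (-(d:ℤ)) d).image (fun t : ℤ => ((N:ℤ) + t).toNat) →
        ε^x * (if a*x + b*nsq x N = d + a*N then 1 else 0) = 0 := by
      intro x _ hnx
      by_cases hc : a*x + b*nsq x N = d + a*N
      · exfalso
        obtain ⟨hq1, hq2⟩ := theta_exp_window ha hab (le_of_eq hc)
        refine hnx (Finset.mem_image.2 ⟨(x:ℤ) - N, ?_, ?_⟩)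
        · rw [Finset.mem_Icc]
          omega
        · omega
      · rw [if_neg hc, mul_zero]
    have hinj : ∀ t₁ ∈ Finset.Icc (-(d:ℤ)) d, ∀ t₂ ∈ Finset.Icc (-(d:ℤ)) d,
        ((N:ℤ) + t₁).toNat = ((N:ℤ) + t₂).toNat → t₁ = t₂ := by
      intro t₁ h₁ t₂ h₂ h12
      rw [Finset.mem_Icc] at h₁ h₂
      omega
    rw [← Finset.sum_subset himg hvan, Finset.sum_image hinj, Finset.mul_sum]
    refine Finset.sum_congr rfl fun t ht => ?_
    rw [Finset.mem_Icc] at ht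
    have hsign : ε^(((N:ℤ) + t).toNat) = ε^N * ε^(t.natAbs) := by
      rw [← pow_add, eps_pow_mod hε (((N:ℤ)+t).toNat), eps_pow_mod hε (N + t.natAbs),
        show ((N:ℤ) + t).toNat % 2 = (N + t.natAbs) % 2 by omega]
    rw [hsign]
    have hcond := theta_cond ha hab (show d ≤ N by omega) t ht.1 ht.2
    by_cases hc : d = thE b a t
    · rw [if_pos hc, if_pos (hcond.mpr hc)]
      ring
    · rw [if_neg hc, if_neg (fun hx => hc (hcond.mp hx))]
      ring
  rw [hRHS, hLHS, hmatch] at hjtp2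
  rw [hTH]
  exact mul_left_cancel₀ (pow_ne_zero N (eps_ne_zero hε)) hjtp2

/-! ### Part F: the substitution x ↦ x² -/

def dbl (f : PS) : PS := PowerSeries.mk fun d => if d % 2 = 0 then coeff (d/2) f else 0

lemma coeff_dbl_even (f : PS) (k : ℕ) : coeff (2*k) (dbl f) = coeff k f := by
  rw [dbl, coeff_mk, if_pos (by omega), Nat.mul_div_cancel_left k (by norm_num : 0 < 2)]

lemma coeff_dbl_odd (f : PS) {k : ℕ} (h : k % 2 = 1) : coeff k (dbl f) = 0 := by
  rw [dbl, coeff_mk, if_neg (by omega)]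

lemma dbl_injective : Function.Injective dbl := by
  intro f g h
  ext k
  rw [← coeff_dbl_even f k, ← coeff_dbl_even g k, h]

lemma dbl_one : dbl 1 = 1 := by
  ext k
  rcases Nat.even_or_odd k with ⟨j, hj⟩ | ⟨j, hj⟩
  · subst hj
    rw [show j + j = 2*j by omega, coeff_dbl_even, PowerSeries.coeff_one, PowerSeries.coeff_one]
    by_cases hj0 : j = 0
    · simp [hj0]
    · rw [if_neg hj0, if_neg (by omega)]
  · subst hj
    rw [coeff_dbl_odd _ (by omega), PowerSeries.coeff_one, if_neg (by omega)]

lemma dbl_add (f g : PS) : dbl (f + g) = dbl f + dbl g := by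
  ext k
  rw [map_add]
  rcases Nat.even_or_odd k with ⟨j, hj⟩ | ⟨j, hj⟩
  · subst hj
    rw [show j + j = 2*j by omega, coeff_dbl_even, coeff_dbl_even, coeff_dbl_even, map_add]
  · subst hj
    rw [coeff_dbl_odd _ (by omega), coeff_dbl_odd _ (by omega), coeff_dbl_odd _ (by omega)]
    ring

lemma dbl_mul (f g : PS) : dbl (f * g) = dbl f * dbl g := by
  ext k
  rcases Nat.even_or_odd k with ⟨j, hj⟩ | ⟨j, hj⟩
  · subst hj
    rw [show j + j = 2*j by omega, coeff_dbl_even, PowerSeries.coeff_mul,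
      PowerSeries.coeff_mul]
    set s := (Finset.HasAntidiagonal.antidiagonal j).image (fun pq : ℕ × ℕ => (2*pq.1, 2*pq.2)) with hs
    have hsub : s ⊆ Finset.HasAntidiagonal.antidiagonal (2*j) := by
      intro x hx
      obtain ⟨pq, hpq, rfl⟩ := Finset.mem_image.mp hx
      rw [Finset.HasAntidiagonal.mem_antidiagonal] at *
      omega
    have hvan : ∀ x ∈ Finset.HasAntidiagonal.antidiagonal (2*j), x ∉ s →
        coeff x.1 (dbl f) * coeff x.2 (dbl g) = 0 := by
      intro x hx hnx
      rw [Finset.HasAntidiagonal.mem_antidiagonal] at hx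
      by_cases h1 : x.1 % 2 = 1
      · rw [coeff_dbl_odd _ h1, zero_mul]
      · by_cases h2 : x.2 % 2 = 1
        · rw [coeff_dbl_odd _ h2, mul_zero]
        · exfalso
          refine hnx (Finset.mem_image.2 ⟨(x.1/2, x.2/2), ?_, ?_⟩)
          · rw [Finset.HasAntidiagonal.mem_antidiagonal]
            omega
          · cases x
            simp only [Prod.mk.injEq]
            omega
    have hinj : ∀ x₁ ∈ Finset.HasAntidiagonal.antidiagonal j, ∀ x₂ ∈ Finset.HasAntidiagonal.antidiagonal j,
        (fun pq : ℕ × ℕ => (2*pq.1, 2*pq.2)) x₁ = (fun pq : ℕ × ℕ => (2*pq.1, 2*pq.2)) x₂ →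
        x₁ = x₂ := by
      intro x₁ _ x₂ _ h12
      simp only [Prod.mk.injEq] at h12
      cases x₁
      cases x₂
      simp only [Prod.mk.injEq]
      omega
    rw [← Finset.sum_subset hsub hvan, hs, Finset.sum_image hinj]
    refine Finset.sum_congr rfl fun pq _ => ?_
    rw [coeff_dbl_even, coeff_dbl_even]
  · subst hj
    rw [coeff_dbl_odd _ (by omega), PowerSeries.coeff_mul]
    symm
    apply Finset.sum_eq_zero
    intro x hx
    rw [Finset.HasAntidiagonal.mem_antidiagonal] at hx
    by_cases h1 : x.1 % 2 = 1
    · rw [coeff_dbl_odd _ h1, zero_mul]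
    · rw [coeff_dbl_odd _ (show x.2 % 2 = 1 by omega), mul_zero]

lemma dbl_prod {ι : Type*} (s : Finset ι) (f : ι → PS) :
    dbl (∏ i ∈ s, f i) = ∏ i ∈ s, dbl (f i) := by
  induction s using Finset.cons_induction with
  | empty => simpa using dbl_one
  | cons a t hat ih =>
    rw [Finset.prod_cons, Finset.prod_cons, dbl_mul, ih]

lemma dbl_sum {ι : Type*} (s : Finset ι) (f : ι → PS) :
    dbl (∑ i ∈ s, f i) = ∑ i ∈ s, dbl (f i) := by
  induction s using Finset.cons_induction with
  | empty =>
    simp only [Finset.sum_empty]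
    ext k
    rcases Nat.even_or_odd k with ⟨j, hj⟩ | ⟨j, hj⟩
    · subst hj
      rw [show j + j = 2*j by omega, coeff_dbl_even, map_zero, map_zero]
    · subst hj
      rw [coeff_dbl_odd _ (by omega), map_zero]
  | cons a t hat ih =>
    rw [Finset.sum_cons, Finset.sum_cons, dbl_add, ih]

lemma dbl_X_pow (n : ℕ) : dbl ((X : PS) ^ n) = X ^ (2*n) := by
  ext k
  rcases Nat.even_or_odd k with ⟨j, hj⟩ | ⟨j, hj⟩
  · subst hj
    rw [show j + j = 2*j by omega, coeff_dbl_even, PowerSeries.coeff_X_pow,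
      PowerSeries.coeff_X_pow]
    by_cases hjn : j = n
    · rw [if_pos hjn, if_pos (by omega)]
    · rw [if_neg hjn, if_neg (by omega)]
  · subst hj
    rw [coeff_dbl_odd _ (by omega), PowerSeries.coeff_X_pow, if_neg (by omega)]

lemma dbl_C (r : ℚ) : dbl (PowerSeries.C r) = PowerSeries.C r := by
  ext k
  rcases Nat.even_or_odd k with ⟨j, hj⟩ | ⟨j, hj⟩
  · subst hj
    rw [show j + j = 2*j by omega, coeff_dbl_even, PowerSeries.coeff_C, PowerSeries.coeff_C]
    by_cases hj0 : j = 0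
    · rw [if_pos hj0, if_pos (by omega)]
    · rw [if_neg hj0, if_neg (by omega)]
  · subst hj
    rw [coeff_dbl_odd _ (by omega), PowerSeries.coeff_C, if_neg (by omega)]

lemma dbl_inv (f : PS) (hf : constantCoeff f ≠ 0) : dbl f⁻¹ = (dbl f)⁻¹ := by
  have h0 : constantCoeff (dbl f) = constantCoeff f := by
    have h := coeff_dbl_even f 0
    rw [show 2*0 = 0 by omega] at h
    rw [← PowerSeries.coeff_zero_eq_constantCoeff_apply,
      ← PowerSeries.coeff_zero_eq_constantCoeff_apply, h]
  have h1 : constantCoeff (dbl f) ≠ 0 := by rw [h0]; exact hf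
  have h2 : dbl f ≠ 0 := by
    intro h
    rw [h, map_zero] at h1
    exact h1 rfl
  apply mul_left_cancel₀ h2
  rw [← dbl_mul, PowerSeries.mul_inv_cancel _ hf, dbl_one, PowerSeries.mul_inv_cancel _ h1]

lemma Stab.dbl_map {ι : Type*} {F : Finset ι → PS} {L : PS} (h : Stab F L) :
    Stab (fun s => dbl (F s)) (dbl L) := by
  intro d
  obtain ⟨s₀, hs⟩ := h d
  refine ⟨s₀, fun s hss j hj => ?_⟩
  simp only
  rcases Nat.even_or_odd j with ⟨i, hi⟩ | ⟨i, hi⟩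
  · subst hi
    rw [show i + i = 2*i by omega, coeff_dbl_even, coeff_dbl_even]
    exact hs s hss i (by omega)
  · subst hi
    rw [coeff_dbl_odd _ (by omega), coeff_dbl_odd _ (by omega)]

lemma StabProd.dbl_map {f : ℕ → PS} {L : PS} (h : StabProd f L) :
    StabProd (fun i => dbl (f i)) (dbl L) := by
  have h2 := Stab.dbl_map h
  intro d
  obtain ⟨s₀, hs⟩ := h2 d
  refine ⟨s₀, fun s hss j hj => ?_⟩
  simp only
  rw [← dbl_prod]
  exact hs s hss j hj

lemma StabSum.dbl_map {ι : Type*} {f : ι → PS} {L : PS} (h : StabSum f L) :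
    StabSum (fun i => dbl (f i)) (dbl L) := by
  have h2 := Stab.dbl_map h
  intro d
  obtain ⟨s₀, hs⟩ := h2 d
  refine ⟨s₀, fun s hss j hj => ?_⟩
  simp only
  rw [← dbl_sum]
  exact hs s hss j hj

lemma dbl_PG (ε : ℚ) {a m : ℕ} (ha : 1 ≤ a) (hm : 1 ≤ m) :
    dbl (PG ε a m) = PG ε (2*a) (2*m) := by
  have h1 : StabProd (fun k => dbl (pG ε a m k)) (dbl (PG ε a m)) :=
    (PG_stab ε ha hm).dbl_map
  have h2 : StabProd (pG ε (2*a) (2*m)) (dbl (PG ε a m)) := by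
    refine h1.congr fun k => ?_
    rw [pG, pG, dbl_add, dbl_one, dbl_mul, dbl_C, dbl_X_pow,
      show 2*(m*k+a) = 2*m*k + 2*a by ring]
  exact Stab.unique h2 (PG_stab ε (by omega) (by omega))

/-! ### Part G: assembly -/

lemma one_sub_pow_eq (e : ℕ) : (1 - X ^ e : PS) = 1 + PowerSeries.C (-1) * X ^ e := by
  rw [map_neg, map_one]
  ring

lemma qPoch_X (t : ℕ) : qPoch (X : PS) X t = poch 1 t := by
  rw [qPoch, poch]
  refine Finset.prod_congr rfl fun k _ => ?_
  rw [show (X : PS) * X ^ k = X ^ (1*(k+1)) by rw [one_mul, pow_succ]; ring]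

lemma qPoch_X2 (t : ℕ) : qPoch ((X : PS)^2) (X^2) t = poch 2 t := by
  rw [qPoch, poch]
  refine Finset.prod_congr rfl fun k _ => ?_
  rw [show ((X : PS)^2) * (X^2) ^ k = X ^ (2*(k+1)) by
    rw [← pow_mul, ← pow_add]
    congr 1
    ring]

lemma constantCoeff_qPoch (t : ℕ) : constantCoeff (qPoch (X : PS) X t) ≠ 0 := by
  rw [qPoch_X, constantCoeff_poch (by norm_num)]
  exact one_ne_zero

lemma dbl_poch (t : ℕ) : dbl (poch 1 t) = poch 2 t := by
  rw [poch, poch, dbl_prod]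
  refine Finset.prod_congr rfl fun k _ => ?_
  rw [one_sub_pow_eq, dbl_add, dbl_one, dbl_mul, dbl_C, dbl_X_pow, ← one_sub_pow_eq,
    show 2*(1*(k+1)) = 2*(k+1) by ring]

/-- summands of the goal's series -/
def sQ : ℕ → PS := fun n => (X : PS) ^ (2 * n ^ 2) * (qPoch (X : PS) X (2 * n))⁻¹

lemma sQ_niceS : NiceS sQ := by
  intro n j hj
  rw [sQ, cf_Xpow_mul', if_neg ?_]
  have h1 : n ≤ n * n := Nat.le_mul_of_pos_left n (by omega)
  have h2 : n^2 = n*n := sq n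
  omega

def SQv : PS := slim sQ

/-- doubled summands -/
def s2 : ℕ → PS := fun n => (X : PS) ^ (4 * n ^ 2) * (poch 2 (2 * n))⁻¹

lemma s2_niceS : NiceS s2 := by
  intro n j hj
  rw [s2, cf_Xpow_mul', if_neg ?_]
  have h1 : n ≤ n * n := Nat.le_mul_of_pos_left n (by omega)
  have h2 : n^2 = n*n := sq n
  omega

def S2v : PS := slim s2

lemma dbl_SQv : dbl SQv = S2v := by
  have h1 : StabSum (fun n => dbl (sQ n)) (dbl SQv) := (sQ_niceS.stabSum).dbl_map
  have h2 : StabSum s2 (dbl SQv) := by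
    refine h1.congr fun n => ?_
    rw [sQ, s2, dbl_mul, dbl_X_pow, dbl_inv _ (constantCoeff_qPoch (2*n)), qPoch_X,
      dbl_poch, show 2*(2*n^2) = 4*n^2 by ring]
  exact Stab.unique h2 s2_niceS.stabSum

lemma C_one_pow (n : ℕ) : (PowerSeries.C (1:ℚ))^n = 1 := by
  rw [map_one, one_pow]

lemma C_neg_one_pow_even {n : ℕ} (h : n % 2 = 0) : (PowerSeries.C (-1:ℚ))^n = 1 := by
  rw [← map_pow, Even.neg_one_pow ⟨n/2, by omega⟩, map_one]

lemma C_neg_one_pow_odd {n : ℕ} (h : n % 2 = 1) : (PowerSeries.C (-1:ℚ))^n = -1 := by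
  rw [← map_pow, Odd.neg_one_pow ⟨n/2, by omega⟩, map_neg, map_one]

/-- `2 S2v = E₊ + E₋` (even part extraction from Euler's series) -/
lemma two_S2v : ES 1 + ES (-1) = 2 * S2v := by
  have h1 : StabSum (fun m => eS 1 m + eS (-1) m) (ES 1 + ES (-1)) :=
    (ES_stab 1).add (ES_stab (-1))
  have hzero : ∀ m : ℕ, m % 2 = 1 → eS 1 m + eS (-1) m = 0 := by
    intro m hm
    rw [eS, eS, C_one_pow, C_neg_one_pow_odd hm]
    ring
  have h2 : StabSum (fun k : ℕ => (eS 1 (2*k) + eS (-1) (2*k))) (2 * S2v) := by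
    have h3 : StabSum (fun k : ℕ => (2:PS) * s2 k) ((2:PS) * S2v) :=
      StabSum.mul_left 2 s2_niceS.stabSum
    refine h3.congr fun k => ?_
    rw [eS, eS, C_one_pow, C_neg_one_pow_even (by omega), s2,
      show (2*k)*(2*k) = 4*k^2 by rw [sq]; ring]
    ring
  exact Stab.unique h1 (StabSum.of_double_nat hzero h2)

/-- theta extraction : `TH 2 1 1 + TH 2 1 (-1) = 2 · TH 8 2 1` -/
lemma theta_extract : TH 2 1 1 + TH 2 1 (-1) = 2 * TH 8 2 1 := by
  have h1 : StabSum (fun i => thF 2 1 1 i + thF 2 1 (-1) i) (TH 2 1 1 + TH 2 1 (-1)) :=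
    (TH_stab (by norm_num) 1).add (TH_stab (by norm_num) (-1))
  have hzero : ∀ i : ℤ, ¬ (2 ∣ i) → thF 2 1 1 i + thF 2 1 (-1) i = 0 := by
    intro i hi
    have hodd : i.natAbs % 2 = 1 := by omega
    rw [thF, thF, C_one_pow, C_neg_one_pow_odd hodd]
    ring
  have h2 : StabSum (fun j : ℤ => (thF 2 1 1 (2*j) + thF 2 1 (-1) (2*j))) (2 * TH 8 2 1) := by
    have h3 : StabSum (fun j : ℤ => (2:PS) * thF 8 2 1 j) ((2:PS) * TH 8 2 1) :=
      StabSum.mul_left 2 (TH_stab (by norm_num) 1)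
    refine h3.congr fun j => ?_
    have hE : thE 2 1 (2*j) = thE 8 2 j := by
      rw [thE, thE]
      congr 1
      push_cast
      ring
    rw [thF, thF, thF, C_one_pow, C_one_pow, C_neg_one_pow_even (by omega), hE]
    ring
  exact Stab.unique h1 (StabSum.of_double_int hzero h2)

lemma PG_pairPM {a m : ℕ} (ha : 1 ≤ a) (hm : 1 ≤ m) :
    PG (-1) a m * PG 1 a m = PG (-1) (2*a) (2*m) := by
  have h := PG_pair (ε := -1) (by norm_num) ha hm
  rwa [neg_neg] at h

lemma RC_chain :
    PG (-1) 2 16 * PG (-1) 14 16 * PG (-1) 16 16 * PG (-1) 12 32 * PG (-1) 20 32 * PG 1 2 2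
      = PG (-1) 16 16 * (PG 1 10 16 * PG 1 6 16) := by
  have hrc1 : PG (1) 2 2 = PG (1) 2 4 * PG (1) 4 4 := by
    have h := PG_split (1) (a := 2) (m := 2) (by norm_num) (by norm_num)
    norm_num at h
    exact h
  have hrc2 : PG (1) 2 4 = PG (1) 2 8 * PG (1) 6 8 := by
    have h := PG_split (1) (a := 2) (m := 4) (by norm_num) (by norm_num)
    norm_num at h
    exact h
  have hrc3 : PG (1) 4 4 = PG (1) 4 8 * PG (1) 8 8 := by
    have h := PG_split (1) (a := 4) (m := 4) (by norm_num) (by norm_num)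
    norm_num at h
    exact h
  have hrc4 : PG (1) 2 8 = PG (1) 2 16 * PG (1) 10 16 := by
    have h := PG_split (1) (a := 2) (m := 8) (by norm_num) (by norm_num)
    norm_num at h
    exact h
  have hrc5 : PG (1) 6 8 = PG (1) 6 16 * PG (1) 14 16 := by
    have h := PG_split (1) (a := 6) (m := 8) (by norm_num) (by norm_num)
    norm_num at h
    exact h
  have hrc6 : PG (1) 4 8 = PG (1) 4 16 * PG (1) 12 16 := by
    have h := PG_split (1) (a := 4) (m := 8) (by norm_num) (by norm_num)
    norm_num at h
    exact h
  have hrc7 : PG (1) 8 8 = PG (1) 8 16 * PG (1) 16 16 := by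
    have h := PG_split (1) (a := 8) (m := 8) (by norm_num) (by norm_num)
    norm_num at h
    exact h
  have hrc8 : PG (1) 12 16 = PG (1) 12 32 * PG (1) 28 32 := by
    have h := PG_split (1) (a := 12) (m := 16) (by norm_num) (by norm_num)
    norm_num at h
    exact h
  have hrc9 : PG (1) 4 16 = PG (1) 4 32 * PG (1) 20 32 := by
    have h := PG_split (1) (a := 4) (m := 16) (by norm_num) (by norm_num)
    norm_num at h
    exact h
  have hrc10 : PG (1) 8 16 = PG (1) 8 32 * PG (1) 24 32 := by
    have h := PG_split (1) (a := 8) (m := 16) (by norm_num) (by norm_num)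
    norm_num at h
    exact h
  have hrc11 : PG (1) 8 32 = PG (1) 8 64 * PG (1) 40 64 := by
    have h := PG_split (1) (a := 8) (m := 32) (by norm_num) (by norm_num)
    norm_num at h
    exact h
  have hrc12 : PG (1) 24 32 = PG (1) 24 64 * PG (1) 56 64 := by
    have h := PG_split (1) (a := 24) (m := 32) (by norm_num) (by norm_num)
    norm_num at h
    exact h
  have hrc13 : PG (-1) 2 16 * PG (1) 2 16 = PG (-1) 4 32 := by
    have h := PG_pair (ε := -1) (a := 2) (m := 16) (by norm_num) (by norm_num) (by norm_num)
    rw [neg_neg] at h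
    norm_num at h
    exact h
  have hrc14 : PG (-1) 14 16 * PG (1) 14 16 = PG (-1) 28 32 := by
    have h := PG_pair (ε := -1) (a := 14) (m := 16) (by norm_num) (by norm_num) (by norm_num)
    rw [neg_neg] at h
    norm_num at h
    exact h
  have hrc15 : PG (-1) 16 16 * PG (1) 16 16 = PG (-1) 32 32 := by
    have h := PG_pair (ε := -1) (a := 16) (m := 16) (by norm_num) (by norm_num) (by norm_num)
    rw [neg_neg] at h
    norm_num at h
    exact h
  have hrc16 : PG (-1) 12 32 * PG (1) 12 32 = PG (-1) 24 64 := by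
    have h := PG_pair (ε := -1) (a := 12) (m := 32) (by norm_num) (by norm_num) (by norm_num)
    rw [neg_neg] at h
    norm_num at h
    exact h
  have hrc17 : PG (-1) 28 32 * PG (1) 28 32 = PG (-1) 56 64 := by
    have h := PG_pair (ε := -1) (a := 28) (m := 32) (by norm_num) (by norm_num) (by norm_num)
    rw [neg_neg] at h
    norm_num at h
    exact h
  have hrc18 : PG (-1) 20 32 * PG (1) 20 32 = PG (-1) 40 64 := by
    have h := PG_pair (ε := -1) (a := 20) (m := 32) (by norm_num) (by norm_num) (by norm_num)
    rw [neg_neg] at h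
    norm_num at h
    exact h
  have hrc19 : PG (-1) 4 32 * PG (1) 4 32 = PG (-1) 8 64 := by
    have h := PG_pair (ε := -1) (a := 4) (m := 32) (by norm_num) (by norm_num) (by norm_num)
    rw [neg_neg] at h
    norm_num at h
    exact h
  have hrc20 : PG (-1) 8 64 * PG (1) 8 64 = PG (-1) 16 128 := by
    have h := PG_pair (ε := -1) (a := 8) (m := 64) (by norm_num) (by norm_num) (by norm_num)
    rw [neg_neg] at h
    norm_num at h
    exact h
  have hrc21 : PG (-1) 40 64 * PG (1) 40 64 = PG (-1) 80 128 := by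
    have h := PG_pair (ε := -1) (a := 40) (m := 64) (by norm_num) (by norm_num) (by norm_num)
    rw [neg_neg] at h
    norm_num at h
    exact h
  have hrc22 : PG (-1) 24 64 * PG (1) 24 64 = PG (-1) 48 128 := by
    have h := PG_pair (ε := -1) (a := 24) (m := 64) (by norm_num) (by norm_num) (by norm_num)
    rw [neg_neg] at h
    norm_num at h
    exact h
  have hrc23 : PG (-1) 56 64 * PG (1) 56 64 = PG (-1) 112 128 := by
    have h := PG_pair (ε := -1) (a := 56) (m := 64) (by norm_num) (by norm_num) (by norm_num)
    rw [neg_neg] at h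
    norm_num at h
    exact h
  have hrc24 : PG (-1) 16 128 * PG (-1) 80 128 = PG (-1) 16 64 := by
    have h := PG_split (-1) (a := 16) (m := 64) (by norm_num) (by norm_num)
    norm_num at h
    exact h.symm
  have hrc25 : PG (-1) 48 128 * PG (-1) 112 128 = PG (-1) 48 64 := by
    have h := PG_split (-1) (a := 48) (m := 64) (by norm_num) (by norm_num)
    norm_num at h
    exact h.symm
  have hrc26 : PG (-1) 16 64 * PG (-1) 48 64 = PG (-1) 16 32 := by
    have h := PG_split (-1) (a := 16) (m := 32) (by norm_num) (by norm_num)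
    norm_num at h
    exact h.symm
  have hrc27 : PG (-1) 16 32 * PG (-1) 32 32 = PG (-1) 16 16 := by
    have h := PG_split (-1) (a := 16) (m := 16) (by norm_num) (by norm_num)
    norm_num at h
    exact h.symm
  linear_combination (norm := ring)
    ((PG (-1) 2 16) * (PG (-1) 12 32) * (PG (-1) 14 16) * (PG (-1) 16 16) * (PG (-1) 20 32)) * hrc1
    + ((PG (1) 4 4) * (PG (-1) 2 16) * (PG (-1) 12 32) * (PG (-1) 14 16) * (PG (-1) 16 16) * (PG (-1) 20 32)) * hrc2
    + ((PG (1) 2 8) * (PG (1) 6 8) * (PG (-1) 2 16) * (PG (-1) 12 32) * (PG (-1) 14 16) * (PG (-1) 16 16) * (PG (-1) 20 32)) * hrc3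
    + ((PG (1) 4 8) * (PG (1) 6 8) * (PG (1) 8 8) * (PG (-1) 2 16) * (PG (-1) 12 32) * (PG (-1) 14 16) * (PG (-1) 16 16) * (PG (-1) 20 32)) * hrc4
    + ((PG (1) 2 16) * (PG (1) 4 8) * (PG (1) 8 8) * (PG (1) 10 16) * (PG (-1) 2 16) * (PG (-1) 12 32) * (PG (-1) 14 16) * (PG (-1) 16 16) * (PG (-1) 20 32)) * hrc5
    + ((PG (1) 2 16) * (PG (1) 6 16) * (PG (1) 8 8) * (PG (1) 10 16) * (PG (1) 14 16) * (PG (-1) 2 16) * (PG (-1) 12 32) * (PG (-1) 14 16) * (PG (-1) 16 16) * (PG (-1) 20 32)) * hrc6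
    + ((PG (1) 2 16) * (PG (1) 4 16) * (PG (1) 6 16) * (PG (1) 10 16) * (PG (1) 12 16) * (PG (1) 14 16) * (PG (-1) 2 16) * (PG (-1) 12 32) * (PG (-1) 14 16) * (PG (-1) 16 16) * (PG (-1) 20 32)) * hrc7
    + ((PG (1) 2 16) * (PG (1) 4 16) * (PG (1) 6 16) * (PG (1) 8 16) * (PG (1) 10 16) * (PG (1) 14 16) * (PG (1) 16 16) * (PG (-1) 2 16) * (PG (-1) 12 32) * (PG (-1) 14 16) * (PG (-1) 16 16) * (PG (-1) 20 32)) * hrc8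
    + ((PG (1) 2 16) * (PG (1) 6 16) * (PG (1) 8 16) * (PG (1) 10 16) * (PG (1) 12 32) * (PG (1) 14 16) * (PG (1) 16 16) * (PG (1) 28 32) * (PG (-1) 2 16) * (PG (-1) 12 32) * (PG (-1) 14 16) * (PG (-1) 16 16) * (PG (-1) 20 32)) * hrc9
    + ((PG (1) 2 16) * (PG (1) 4 32) * (PG (1) 6 16) * (PG (1) 10 16) * (PG (1) 12 32) * (PG (1) 14 16) * (PG (1) 16 16) * (PG (1) 20 32) * (PG (1) 28 32) * (PG (-1) 2 16) * (PG (-1) 12 32) * (PG (-1) 14 16) * (PG (-1) 16 16) * (PG (-1) 20 32)) * hrc10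
    + ((PG (1) 2 16) * (PG (1) 4 32) * (PG (1) 6 16) * (PG (1) 10 16) * (PG (1) 12 32) * (PG (1) 14 16) * (PG (1) 16 16) * (PG (1) 20 32) * (PG (1) 24 32) * (PG (1) 28 32) * (PG (-1) 2 16) * (PG (-1) 12 32) * (PG (-1) 14 16) * (PG (-1) 16 16) * (PG (-1) 20 32)) * hrc11
    + ((PG (1) 2 16) * (PG (1) 4 32) * (PG (1) 6 16) * (PG (1) 8 64) * (PG (1) 10 16) * (PG (1) 12 32) * (PG (1) 14 16) * (PG (1) 16 16) * (PG (1) 20 32) * (PG (1) 28 32) * (PG (1) 40 64) * (PG (-1) 2 16) * (PG (-1) 12 32) * (PG (-1) 14 16) * (PG (-1) 16 16) * (PG (-1) 20 32)) * hrc12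
    + ((PG (1) 4 32) * (PG (1) 6 16) * (PG (1) 8 64) * (PG (1) 10 16) * (PG (1) 12 32) * (PG (1) 14 16) * (PG (1) 16 16) * (PG (1) 20 32) * (PG (1) 24 64) * (PG (1) 28 32) * (PG (1) 40 64) * (PG (1) 56 64) * (PG (-1) 12 32) * (PG (-1) 14 16) * (PG (-1) 16 16) * (PG (-1) 20 32)) * hrc13
    + ((PG (1) 4 32) * (PG (1) 6 16) * (PG (1) 8 64) * (PG (1) 10 16) * (PG (1) 12 32) * (PG (1) 16 16) * (PG (1) 20 32) * (PG (1) 24 64) * (PG (1) 28 32) * (PG (1) 40 64) * (PG (1) 56 64) * (PG (-1) 4 32) * (PG (-1) 12 32) * (PG (-1) 16 16) * (PG (-1) 20 32)) * hrc14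
    + ((PG (1) 4 32) * (PG (1) 6 16) * (PG (1) 8 64) * (PG (1) 10 16) * (PG (1) 12 32) * (PG (1) 20 32) * (PG (1) 24 64) * (PG (1) 28 32) * (PG (1) 40 64) * (PG (1) 56 64) * (PG (-1) 4 32) * (PG (-1) 12 32) * (PG (-1) 20 32) * (PG (-1) 28 32)) * hrc15
    + ((PG (1) 4 32) * (PG (1) 6 16) * (PG (1) 8 64) * (PG (1) 10 16) * (PG (1) 20 32) * (PG (1) 24 64) * (PG (1) 28 32) * (PG (1) 40 64) * (PG (1) 56 64) * (PG (-1) 4 32) * (PG (-1) 20 32) * (PG (-1) 28 32) * (PG (-1) 32 32)) * hrc16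
    + ((PG (1) 4 32) * (PG (1) 6 16) * (PG (1) 8 64) * (PG (1) 10 16) * (PG (1) 20 32) * (PG (1) 24 64) * (PG (1) 40 64) * (PG (1) 56 64) * (PG (-1) 4 32) * (PG (-1) 20 32) * (PG (-1) 24 64) * (PG (-1) 32 32)) * hrc17
    + ((PG (1) 4 32) * (PG (1) 6 16) * (PG (1) 8 64) * (PG (1) 10 16) * (PG (1) 24 64) * (PG (1) 40 64) * (PG (1) 56 64) * (PG (-1) 4 32) * (PG (-1) 24 64) * (PG (-1) 32 32) * (PG (-1) 56 64)) * hrc18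
    + ((PG (1) 6 16) * (PG (1) 8 64) * (PG (1) 10 16) * (PG (1) 24 64) * (PG (1) 40 64) * (PG (1) 56 64) * (PG (-1) 24 64) * (PG (-1) 32 32) * (PG (-1) 40 64) * (PG (-1) 56 64)) * hrc19
    + ((PG (1) 6 16) * (PG (1) 10 16) * (PG (1) 24 64) * (PG (1) 40 64) * (PG (1) 56 64) * (PG (-1) 24 64) * (PG (-1) 32 32) * (PG (-1) 40 64) * (PG (-1) 56 64)) * hrc20
    + ((PG (1) 6 16) * (PG (1) 10 16) * (PG (1) 24 64) * (PG (1) 56 64) * (PG (-1) 16 128) * (PG (-1) 24 64) * (PG (-1) 32 32) * (PG (-1) 56 64)) * hrc21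
    + ((PG (1) 6 16) * (PG (1) 10 16) * (PG (1) 56 64) * (PG (-1) 16 128) * (PG (-1) 32 32) * (PG (-1) 56 64) * (PG (-1) 80 128)) * hrc22
    + ((PG (1) 6 16) * (PG (1) 10 16) * (PG (-1) 16 128) * (PG (-1) 32 32) * (PG (-1) 48 128) * (PG (-1) 80 128)) * hrc23
    + ((PG (1) 6 16) * (PG (1) 10 16) * (PG (-1) 32 32) * (PG (-1) 48 128) * (PG (-1) 112 128)) * hrc24
    + ((PG (1) 6 16) * (PG (1) 10 16) * (PG (-1) 16 64) * (PG (-1) 32 32)) * hrc25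
    + ((PG (1) 6 16) * (PG (1) 10 16) * (PG (-1) 32 32)) * hrc26
    + ((PG (1) 6 16) * (PG (1) 10 16)) * hrc27

lemma half_eq : PG (-1) 4 4 * S2v = PG (-1) 16 16 * (PG 1 10 16 * PG 1 6 16) := by
  have h2 : (2:PS) ≠ 0 := by
    intro h
    have := congrArg (constantCoeff) h
    rw [map_ofNat, map_zero] at this
    norm_num at this
  apply mul_left_cancel₀ h2
  have hjtpP := jtp_limit (b := 2) (a := 1) (by norm_num) (by norm_num) (ε := 1) (by norm_num)
  have hjtpM := jtp_limit (b := 2) (a := 1) (by norm_num) (by norm_num) (ε := -1) (by norm_num)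
  have hjtpT := jtp_limit (b := 8) (a := 2) (by norm_num) (by norm_num) (ε := 1) (by norm_num)
  norm_num at hjtpP hjtpM hjtpT
  have hsplP : PG 1 1 2 = PG 1 1 4 * PG 1 3 4 := by
    have h := PG_split 1 (a := 1) (m := 2) (by norm_num) (by norm_num)
    norm_num at h
    exact h
  have hsplM : PG (-1) 1 2 = PG (-1) 1 4 * PG (-1) 3 4 := by
    have h := PG_split (-1) (a := 1) (m := 2) (by norm_num) (by norm_num)
    norm_num at h
    exact h
  calc (2:PS) * (PG (-1) 4 4 * S2v)
      = PG (-1) 4 4 * (2 * S2v) := by ring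
    _ = PG (-1) 4 4 * (ES 1 + ES (-1)) := by rw [← two_S2v]
    _ = PG (-1) 4 4 * (PG 1 1 2 + PG (-1) 1 2) := by rw [ES_eq, ES_eq]
    _ = PG (-1) 4 4 * (PG 1 3 4 * PG 1 1 4) + PG (-1) 4 4 * (PG (-1) 3 4 * PG (-1) 1 4) := by
        rw [hsplP, hsplM]
        ring
    _ = TH 2 1 1 + TH 2 1 (-1) := by rw [hjtpP, hjtpM]
    _ = 2 * TH 8 2 1 := theta_extract
    _ = 2 * (PG (-1) 16 16 * (PG 1 10 16 * PG 1 6 16)) := by rw [hjtpT]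

lemma main_eq : PG (-1) 2 2 * S2v
    = PG (-1) 2 16 * PG (-1) 14 16 * PG (-1) 16 16 * PG (-1) 12 32 * PG (-1) 20 32 := by
  apply mul_right_cancel₀ (PG_ne_zero 1 (by norm_num : (1:ℕ) ≤ 2) (m := 2))
  calc (PG (-1) 2 2 * S2v) * PG 1 2 2
      = (PG (-1) 2 2 * PG 1 2 2) * S2v := by ring
    _ = PG (-1) 4 4 * S2v := by
        have h := PG_pairPM (a := 2) (m := 2) (by norm_num) (by norm_num)
        norm_num at h
        rw [h]
    _ = PG (-1) 16 16 * (PG 1 10 16 * PG 1 6 16) := half_eq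
    _ = PG (-1) 2 16 * PG (-1) 14 16 * PG (-1) 16 16 * PG (-1) 12 32 * PG (-1) 20 32
        * PG 1 2 2 := RC_chain.symm

end Slater

open Slater PowerSeries

/-- Slater's identity (83):
$(q;q)_\infty \sum_{n\ge0} \frac{q^{2n^2}}{(q;q)_{2n}}
 = (q;q^8)_\infty (q^7;q^8)_\infty (q^8;q^8)_\infty (q^6;q^{16})_\infty (q^{10};q^{16})_\infty$,
as formal power series in `q`. -/
theorem slater_83 :
    (∏' k : ℕ, (1 - Q ^ (k + 1))) *
        ∑' n : ℕ, Q ^ (2 * n ^ 2) * (qPoch Q Q (2 * n))⁻¹ =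
      (∏' k : ℕ, (1 - Q ^ (8 * k + 1))) * (∏' k : ℕ, (1 - Q ^ (8 * k + 7))) *
        (∏' k : ℕ, (1 - Q ^ (8 * k + 8))) * (∏' k : ℕ, (1 - Q ^ (16 * k + 6))) *
        (∏' k : ℕ, (1 - Q ^ (16 * k + 10))) := by
  
  have e0 : (∏' k : ℕ, (1 - (X : PS) ^ (k + 1))) = PG (-1) 1 1 := by
    rw [show (fun k : ℕ => 1 - (X : PS) ^ (k + 1)) = pG (-1) 1 1 by
      funext k
      rw [pG, map_neg, map_one, one_mul]
      ring]
    exact (PG_stab (-1) le_rfl le_rfl).tprod_eq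
  have e1 : (∏' k : ℕ, (1 - (X : PS) ^ (8 * k + 1))) = PG (-1) 1 8 := by
    rw [show (fun k : ℕ => 1 - (X : PS) ^ (8 * k + 1)) = pG (-1) 1 8 by
      funext k
      rw [pG, map_neg, map_one]
      ring]
    exact (PG_stab (-1) (by norm_num) (by norm_num)).tprod_eq
  have e2 : (∏' k : ℕ, (1 - (X : PS) ^ (8 * k + 7))) = PG (-1) 7 8 := by
    rw [show (fun k : ℕ => 1 - (X : PS) ^ (8 * k + 7)) = pG (-1) 7 8 by
      funext k
      rw [pG, map_neg, map_one]
      ring]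
    exact (PG_stab (-1) (by norm_num) (by norm_num)).tprod_eq
  have e3 : (∏' k : ℕ, (1 - (X : PS) ^ (8 * k + 8))) = PG (-1) 8 8 := by
    rw [show (fun k : ℕ => 1 - (X : PS) ^ (8 * k + 8)) = pG (-1) 8 8 by
      funext k
      rw [pG, map_neg, map_one]
      ring]
    exact (PG_stab (-1) (by norm_num) (by norm_num)).tprod_eq
  have e4 : (∏' k : ℕ, (1 - (X : PS) ^ (16 * k + 6))) = PG (-1) 6 16 := by
    rw [show (fun k : ℕ => 1 - (X : PS) ^ (16 * k + 6)) = pG (-1) 6 16 by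
      funext k
      rw [pG, map_neg, map_one]
      ring]
    exact (PG_stab (-1) (by norm_num) (by norm_num)).tprod_eq
  have e5 : (∏' k : ℕ, (1 - (X : PS) ^ (16 * k + 10))) = PG (-1) 10 16 := by
    rw [show (fun k : ℕ => 1 - (X : PS) ^ (16 * k + 10)) = pG (-1) 10 16 by
      funext k
      rw [pG, map_neg, map_one]
      ring]
    exact (PG_stab (-1) (by norm_num) (by norm_num)).tprod_eq
  have eS : (∑' n : ℕ, (X : PS) ^ (2 * n ^ 2) * (qPoch (X : PS) X (2 * n))⁻¹) = SQv :=
    (sQ_niceS.stabSum).tsum_eq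
  rw [e0, e1, e2, e3, e4, e5, eS]
  apply dbl_injective
  have d11 : dbl (PG (-1) 1 1) = PG (-1) 2 2 := by
    have h := dbl_PG (-1) (a := 1) (m := 1) le_rfl le_rfl
    norm_num at h
    exact h
  have d18 : dbl (PG (-1) 1 8) = PG (-1) 2 16 := by
    have h := dbl_PG (-1) (a := 1) (m := 8) (by norm_num) (by norm_num)
    norm_num at h
    exact h
  have d78 : dbl (PG (-1) 7 8) = PG (-1) 14 16 := by
    have h := dbl_PG (-1) (a := 7) (m := 8) (by norm_num) (by norm_num)
    norm_num at h
    exact h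
  have d88 : dbl (PG (-1) 8 8) = PG (-1) 16 16 := by
    have h := dbl_PG (-1) (a := 8) (m := 8) (by norm_num) (by norm_num)
    norm_num at h
    exact h
  have d616 : dbl (PG (-1) 6 16) = PG (-1) 12 32 := by
    have h := dbl_PG (-1) (a := 6) (m := 16) (by norm_num) (by norm_num)
    norm_num at h
    exact h
  have d1016 : dbl (PG (-1) 10 16) = PG (-1) 20 32 := by
    have h := dbl_PG (-1) (a := 10) (m := 16) (by norm_num) (by norm_num)
    norm_num at h
    exact h
  rw [dbl_mul, dbl_mul, dbl_mul, dbl_mul, dbl_mul, d11, d18, d78, d88, d616, d1016, dbl_SQv]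
  exact main_eq
end
end
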